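/- arXiv:2110.14453 — 8 statements merged into one kernel-verified Lean document; each statement's English description precedes it below -/
import Mathlib

section
/- For all integers m, n ≥ 3 with not both m = 4 and n = 4, the direct product of cycle graphs C_m × C_n has total chromatic number exactly 5 (i.e., C_m × C_n is Type 1, since it is 4-regular). -/
open SimpleGraph

/-- Tensor (direct / categorical) product of simple graphs:
`(u, v)` is adjacent to `(u', v')` iff `u ~ u'` in `G` and `v ~ v'` in `H`. -/
def tensorProd {V W : Type*} (G : SimpleGraph V) (H : SimpleGraph W) :
    SimpleGraph (V × W) where
  Adj x y := G.Adj x.1 y.1 ∧ H.Adj x.2 y.2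
  symm := ⟨fun _ _ h => ⟨h.1.symm, h.2.symm⟩⟩
  loopless := ⟨fun x h => G.loopless.irrefl x.1 h.1⟩

instance {V W : Type*} (G : SimpleGraph V) (H : SimpleGraph W)
    [DecidableRel G.Adj] [DecidableRel H.Adj] : DecidableRel (tensorProd G H).Adj :=
  fun x y => inferInstanceAs (Decidable (G.Adj x.1 y.1 ∧ H.Adj x.2 y.2))

/-- `G` has a proper total coloring with `k` colors: adjacent vertices get distinct
colors, distinct incident edges get distinct colors, and each edge gets a color
distinct from those of both of its endpoints. -/
def HasTotalColoring {V : Type*} (G : SimpleGraph V) (k : ℕ) : Prop :=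
  ∃ (cv : V → Fin k) (ce : Sym2 V → Fin k),
    (∀ u v, G.Adj u v → cv u ≠ cv v) ∧
    (∀ u v w, G.Adj u v → G.Adj u w → v ≠ w → ce s(u, v) ≠ ce s(u, w)) ∧
    (∀ u v, G.Adj u v → ce s(u, v) ≠ cv u ∧ ce s(u, v) ≠ cv v)

/-- The total chromatic number: the least `k` such that `G` has a `k`-total coloring. -/
noncomputable def totalChromaticNumber {V : Type*} (G : SimpleGraph V) : ℕ :=
  sInf {k | HasTotalColoring G k}



section FinHelpers
variable {s : ℕ} [NeZero s]

lemma fin_one_val (hs : 3 ≤ s) : ((1 : Fin s) : ℕ) = 1 := by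
  rw [Fin.val_one']; exact Nat.mod_eq_of_lt (by omega)

lemma fin_two_ne (hs : 3 ≤ s) (a : Fin s) : a + 1 + 1 ≠ a := by
  intro h
  have h2 : ((1 : Fin s) + 1 : Fin s) = 0 := by
    have h' : a + ((1 : Fin s) + 1) = a + 0 := by
      rw [← add_assoc, h, add_zero]
    exact add_left_cancel h'
  have h3 : (((1 : Fin s) + 1 : Fin s) : ℕ) = 2 := by
    rw [Fin.val_add, fin_one_val hs]; exact Nat.mod_eq_of_lt (by omega)
  rw [h2] at h3
  simp at h3

lemma fin_sub_ne_add (hs : 3 ≤ s) (a : Fin s) : a - 1 ≠ a + 1 := by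
  intro h
  have h' : a = a + 1 + 1 := by
    conv_lhs => rw [← sub_add_cancel a 1, h]
  exact fin_two_ne hs a h'.symm

lemma cyc_adj (hs : 3 ≤ s) {u v : Fin s} :
    (cycleGraph s).Adj u v ↔ v = u + 1 ∨ u = v + 1 := by
  rw [cycleGraph_adj']
  have e1 : ((u - v : Fin s) : ℕ) = 1 ↔ u - v = 1 := by
    rw [Fin.ext_iff, fin_one_val hs]
  have e2 : ((v - u : Fin s) : ℕ) = 1 ↔ v - u = 1 := by
    rw [Fin.ext_iff, fin_one_val hs]
  rw [e1, e2, sub_eq_iff_eq_add, sub_eq_iff_eq_add]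
  constructor
  · rintro (h | h)
    · exact Or.inr (h.trans (add_comm 1 v))
    · exact Or.inl (h.trans (add_comm 1 u))
  · rintro (h | h)
    · exact Or.inr (h.trans (add_comm u 1))
    · exact Or.inl (h.trans (add_comm v 1))

end FinHelpers



abbrev St : Type := ZMod 5 × ZMod 5 × ZMod 5

def OkSt (s : St) : Prop :=
  s.1 ≠ 0 ∧ s.2.1 ≠ 0 ∧ s.2.2 ≠ 0 ∧ s.2.1 ≠ s.1 ∧ s.2.2 ≠ s.1 ∧ s.2.1 ≠ s.2.2

def RelSt (s t : St) : Prop :=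
  t.2.1 ≠ t.2.2 ∧ t.2.1 ≠ s.2.1 - s.1 ∧ t.2.1 ≠ s.2.2 - s.1 ∧
  t.2.2 ≠ s.2.1 - s.1 ∧ t.2.2 ≠ s.2.2 - s.1 ∧ s.2.1 ≠ s.2.2

instance : DecidablePred OkSt := fun s => by unfold OkSt; infer_instance
instance : ∀ s t : St, Decidable (RelSt s t) := fun s t => by unfold RelSt; infer_instance

def Xst : St := (1, 2, 4)

def SN (W : ℕ → St) : ℕ → ZMod 5
  | 0 => 0
  | t + 1 => SN W t + (W (t + 1)).1

def stN (r : ℕ) (W : ℕ → St) (i : ℕ) : St := if i < r then W 0 else W (i - r + 1)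

def AN (r : ℕ) (W : ℕ → St) (i : ℕ) : ZMod 5 :=
  if i ≤ r then (i : ZMod 5) else (r : ZMod 5) + SN W (i - r)

section Generic
variable (r ℓ : ℕ) (W : ℕ → St)

lemma AN_ge {i : ℕ} (h : r ≤ i) : AN r W i = (r : ZMod 5) + SN W (i - r) := by
  rcases eq_or_lt_of_le h with h' | h'
  · subst h'; simp [AN, SN]
  · rw [AN, if_neg (by omega)]

lemma AN_step (hd : (W 0).1 = 1) (i : ℕ) :
    AN r W (i + 1) = AN r W i + (stN r W i).1 := by
  rcases le_or_gt (i + 1) r with h | h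
  · rw [AN, if_pos h, AN, if_pos (by omega), stN, if_pos (by omega), hd]
    push_cast; ring
  · rw [AN_ge r W (by omega : r ≤ i + 1), AN_ge r W (by omega : r ≤ i),
      stN, if_neg (by omega), show i + 1 - r = (i - r) + 1 by omega, SN]
    ring

lemma ok_stN (hOk : ∀ t ≤ ℓ + 1, OkSt (W t)) (i : ℕ) (hi : i < r + ℓ) :
    OkSt (stN r W i) := by
  rw [stN]; split
  · exact hOk 0 (by omega)
  · exact hOk (i - r + 1) (by omega)

lemma rel_stN (hr : 1 ≤ r) (hW : ∀ t ≤ ℓ + 1, RelSt (W t) (W (t + 1)))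
    (hst : ∀ t, ℓ + 1 ≤ t → W t = W 0) (i : ℕ) (hi : i < r + ℓ) :
    RelSt (stN r W i) (stN r W ((i + 1) % (r + ℓ))) := by
  have hXX : RelSt (W 0) (W 0) := by
    have h := hW (ℓ + 1) le_rfl
    rwa [hst (ℓ + 1) le_rfl, hst (ℓ + 2) (by omega)] at h
  rcases lt_or_ge (i + 1) r with h1 | h1
  · -- X → X
    rw [Nat.mod_eq_of_lt (by omega), stN, if_pos (by omega), stN, if_pos h1]
    exact hXX
  · rcases eq_or_lt_of_le h1 with h2 | h2
    · -- i + 1 = r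
      rcases Nat.eq_zero_or_pos ℓ with hl | hl
      · -- wrap, ℓ = 0 : X → X
        subst hl
        rw [show i + 1 = r + 0 by omega, Nat.mod_self, stN, if_pos (by omega), stN,
          if_pos (by omega)]
        exact hXX
      · rw [Nat.mod_eq_of_lt (by omega), ← h2, stN, if_pos (by omega), stN,
          if_neg (by omega), show r - r + 1 = 1 by omega]
        exact hW 0 (by omega)
    · -- i ≥ r
      rcases lt_or_ge (i + 1) (r + ℓ) with h3 | h3
      · rw [Nat.mod_eq_of_lt h3, stN, if_neg (by omega), stN, if_neg (by omega),
          show i + 1 - r + 1 = (i - r + 1) + 1 by omega]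
        exact hW (i - r + 1) (by omega)
      · -- i = r + ℓ - 1, wrap to 0
        have hi1 : i + 1 = r + ℓ := by omega
        rw [hi1, Nat.mod_self, stN, if_neg (by omega), stN, if_pos (by omega),
          show i - r + 1 = ℓ by omega]
        have h := hW ℓ (by omega)
        rwa [hst (ℓ + 1) le_rfl] at h
end Generic

def Wf (T : List St) : ℕ → St := fun t => (Xst :: T).getD t Xst

lemma build (m : ℕ) [NeZero m] (T : List St) (hm : 3 ≤ m) (hlen : T.length + 1 ≤ m)
    (hOk : ∀ t ≤ T.length + 1, OkSt (Wf T t))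
    (hW : ∀ t ≤ T.length + 1, RelSt (Wf T t) (Wf T (t + 1)))
    (hSum : ((m - T.length : ℕ) : ZMod 5) + SN (Wf T) T.length = 0) :
    ∃ (A : Fin m → ZMod 5) (S : Fin m → St),
      (∀ i, OkSt (S i)) ∧ (∀ i, RelSt (S i) (S (i + 1))) ∧
      (∀ i, A (i + 1) = A i + (S i).1) := by
  set ℓ := T.length with hl
  set r := m - ℓ with hrdef
  have hrl : r + ℓ = m := by omega
  have hr : 1 ≤ r := by omega
  have hst : ∀ t, ℓ + 1 ≤ t → Wf T t = Wf T 0 := by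
    intro t ht
    rw [Wf, List.getD_eq_default _ _ (by simp [hl]; omega)]
    rfl
  have hd : (Wf T 0).1 = 1 := rfl
  have hone : ((1 : Fin m) : ℕ) = 1 := by
    rw [Fin.val_one']; exact Nat.mod_eq_of_lt (by omega)
  have hvadd : ∀ i : Fin m, ((i + 1 : Fin m) : ℕ) = ((i : ℕ) + 1) % m := by
    intro i; rw [Fin.val_add, hone]
  refine ⟨fun i => AN r (Wf T) i.val, fun i => stN r (Wf T) i.val, fun i => ?_,
    fun i => ?_, fun i => ?_⟩
  · exact ok_stN r ℓ (Wf T) hOk i.val (by rw [hrl]; exact i.isLt)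
  · show RelSt (stN r (Wf T) i.val) (stN r (Wf T) ((i + 1 : Fin m) : ℕ))
    have h := rel_stN r ℓ (Wf T) hr hW hst i.val (by rw [hrl]; exact i.isLt)
    rwa [hrl, ← hvadd i] at h
  · show AN r (Wf T) ((i + 1 : Fin m) : ℕ) = AN r (Wf T) i.val + (stN r (Wf T) i.val).1
    rcases lt_or_ge (i.val + 1) m with h | h
    · rw [hvadd, Nat.mod_eq_of_lt h]
      exact AN_step r (Wf T) hd i.val
    · have hv : i.val = m - 1 := by have := i.isLt; omega
      have hz : ((i + 1 : Fin m) : ℕ) = 0 := by rw [hvadd, hv, show m - 1 + 1 = m by omega, Nat.mod_self]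
      have hstep := AN_step r (Wf T) hd i.val
      have hm0 : AN r (Wf T) m = 0 := by
        rw [← hrl, AN_ge r (Wf T) (by omega), show r + ℓ - r = ℓ by omega]
        simpa using hSum
      rw [show i.val + 1 = m by omega, hm0] at hstep
      have hzz : AN r (Wf T) ((i + 1 : Fin m) : ℕ) = 0 := by rw [hz]; simp [AN]
      rw [hzz, hstep]

def T1 : List St := [(3,2,4),(1,2,3),(1,3,4),(3,1,4)]
def T2 : List St := [(3,2,4),(1,2,3),(1,3,4),(3,1,4),(3,2,4),(1,2,3),(1,3,4),(3,1,4)]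
def T3 : List St := [(3,2,4),(4,2,3),(3,1,2),(4,1,2),(3,1,4)]
def T4 : List St := [(3,2,4),(1,2,3),(2,3,4),(2,3,4),(1,3,4),(3,1,4)]

lemma seq_exists (m : ℕ) [NeZero m] (hm5 : 5 ≤ m) (hm7 : m ≠ 7) :
    ∃ (A : Fin m → ZMod 5) (S : Fin m → St),
      (∀ i, OkSt (S i)) ∧ (∀ i, RelSt (S i) (S (i + 1))) ∧
      (∀ i, A (i + 1) = A i + (S i).1) := by
  have h5 : m % 5 < 5 := Nat.mod_lt m (by norm_num)
  interval_cases h : m % 5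
  · have hLen : ([] : List St).length = 0 := rfl
    refine build m [] (by omega) (by rw [hLen]; omega) ?_ ?_ ?_
    · intro t ht; rw [hLen] at ht; interval_cases t <;> decide
    · intro t ht; rw [hLen] at ht; interval_cases t <;> decide
    · simp only [hLen]
      rw [← ZMod.natCast_mod (m - 0) 5, show (m - 0) % 5 = 0 from by omega]
      decide
  · have hLen : T1.length = 4 := rfl
    refine build m T1 (by omega) (by rw [hLen]; omega) ?_ ?_ ?_
    · intro t ht; rw [hLen] at ht; interval_cases t <;> decide
    · intro t ht; rw [hLen] at ht; interval_cases t <;> decide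
    · simp only [hLen]
      rw [← ZMod.natCast_mod (m - 4) 5, show (m - 4) % 5 = 2 from by omega]
      decide
  · have hLen : T2.length = 8 := rfl
    refine build m T2 (by omega) (by rw [hLen]; omega) ?_ ?_ ?_
    · intro t ht; rw [hLen] at ht; interval_cases t <;> decide
    · intro t ht; rw [hLen] at ht; interval_cases t <;> decide
    · simp only [hLen]
      rw [← ZMod.natCast_mod (m - 8) 5, show (m - 8) % 5 = 4 from by omega]
      decide
  · have hLen : T3.length = 5 := rfl
    refine build m T3 (by omega) (by rw [hLen]; omega) ?_ ?_ ?_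
    · intro t ht; rw [hLen] at ht; interval_cases t <;> decide
    · intro t ht; rw [hLen] at ht; interval_cases t <;> decide
    · simp only [hLen]
      rw [← ZMod.natCast_mod (m - 5) 5, show (m - 5) % 5 = 3 from by omega]
      decide
  · have hLen : T4.length = 6 := rfl
    refine build m T4 (by omega) (by rw [hLen]; omega) ?_ ?_ ?_
    · intro t ht; rw [hLen] at ht; interval_cases t <;> decide
    · intro t ht; rw [hLen] at ht; interval_cases t <;> decide
    · simp only [hLen]
      rw [← ZMod.natCast_mod (m - 6) 5, show (m - 6) % 5 = 3 from by omega]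
      decide


section Bridge


variable {m n : ℕ} [NeZero m] [NeZero n]

lemma bridge (hm : 3 ≤ m) (hn : 3 ≤ n)
    (cv ep em : Fin m × Fin n → ZMod 5)
    (H1 : ∀ x : Fin m × Fin n,
      cv x ≠ cv (x.1 + 1, x.2 + 1) ∧ cv x ≠ cv (x.1 + 1, x.2 - 1))
    (H2 : ∀ x : Fin m × Fin n,
      ep x ≠ cv x ∧ ep x ≠ cv (x.1 + 1, x.2 + 1) ∧
      em x ≠ cv x ∧ em x ≠ cv (x.1 + 1, x.2 - 1))
    (H3 : ∀ x : Fin m × Fin n,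
      ep x ≠ em x ∧
      ep x ≠ ep (x.1 - 1, x.2 - 1) ∧
      ep x ≠ em (x.1 - 1, x.2 + 1) ∧
      em x ≠ ep (x.1 - 1, x.2 - 1) ∧
      em x ≠ em (x.1 - 1, x.2 + 1) ∧
      ep (x.1 - 1, x.2 - 1) ≠ em (x.1 - 1, x.2 + 1)) :
    HasTotalColoring (tensorProd (cycleGraph m) (cycleGraph n)) 5 := by
  set B : (Fin m × Fin n) → (Fin m × Fin n) → ZMod 5 := fun x y =>
    if y.1 = x.1 + 1 then
      (if y.2 = x.2 + 1 then ep x else if y.2 = x.2 - 1 then em x else 0)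
    else 0 with hB
  set ce : Sym2 (Fin m × Fin n) → ZMod 5 :=
    Sym2.lift ⟨fun x y => B x y + B y x, fun x y => add_comm _ _⟩ with hce
  -- neighbor classification
  have ncases : ∀ u v : Fin m × Fin n,
      (tensorProd (cycleGraph m) (cycleGraph n)).Adj u v →
      v = (u.1 + 1, u.2 + 1) ∨ v = (u.1 + 1, u.2 - 1) ∨
      v = (u.1 - 1, u.2 - 1) ∨ v = (u.1 - 1, u.2 + 1) := by
    rintro u v ⟨h1, h2⟩
    rw [cyc_adj hm] at h1
    rw [cyc_adj hn] at h2
    have e1 : v.1 = u.1 + 1 ∨ v.1 = u.1 - 1 := by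
      rcases h1 with h | h
      · exact Or.inl h
      · exact Or.inr (by rw [eq_sub_iff_add_eq, ← h])
    have e2 : v.2 = u.2 + 1 ∨ v.2 = u.2 - 1 := by
      rcases h2 with h | h
      · exact Or.inl h
      · exact Or.inr (by rw [eq_sub_iff_add_eq, ← h])
    rcases e1 with h1' | h1' <;> rcases e2 with h2' | h2'
    · exact Or.inl (Prod.ext h1' h2')
    · exact Or.inr (Or.inl (Prod.ext h1' h2'))
    · exact Or.inr (Or.inr (Or.inr (Prod.ext h1' h2')))
    · exact Or.inr (Or.inr (Or.inl (Prod.ext h1' h2')))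
  -- edge color evaluations
  have nm2 : ∀ a : Fin m, ¬ (a = a + 1 + 1) := fun a h => fin_two_ne hm a h.symm
  have nn2 : ∀ a : Fin n, ¬ (a = a + 1 + 1) := fun a h => fin_two_ne hn a h.symm
  have nms : ∀ a : Fin m, ¬ (a - 1 = a + 1) := fun a => fin_sub_ne_add hm a
  have nns : ∀ a : Fin n, ¬ (a - 1 = a + 1) := fun a => fin_sub_ne_add hn a
  have ce1 : ∀ u : Fin m × Fin n, ce s(u, (u.1 + 1, u.2 + 1)) = ep u := by
    intro u
    show B u _ + B _ u = ep u
    simp [hB, nm2 u.1]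
  have ce2 : ∀ u : Fin m × Fin n, ce s(u, (u.1 + 1, u.2 - 1)) = em u := by
    intro u
    show B u _ + B _ u = em u
    simp [hB, nm2 u.1, nns u.2]
  have ce3 : ∀ u : Fin m × Fin n,
      ce s(u, (u.1 - 1, u.2 - 1)) = ep (u.1 - 1, u.2 - 1) := by
    intro u
    show B u _ + B _ u = ep _
    simp [hB, nms u.1, sub_add_cancel]
  have ce4 : ∀ u : Fin m × Fin n,
      ce s(u, (u.1 - 1, u.2 + 1)) = em (u.1 - 1, u.2 + 1) := by
    intro u
    show B u _ + B _ u = em _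
    simp [hB, nms u.1, nn2 u.2, sub_add_cancel, add_sub_cancel_right]
  refine ⟨cv, ce, ?_, ?_, ?_⟩
  · -- vertex coloring proper
    intro u v hadj
    rcases ncases u v hadj with rfl | rfl | rfl | rfl
    · exact (H1 u).1
    · exact (H1 u).2
    · have h := (H1 (u.1 - 1, u.2 - 1)).1
      simp only [sub_add_cancel] at h
      exact fun he => h (by rw [← he])
    · have h := (H1 (u.1 - 1, u.2 + 1)).2
      simp only [sub_add_cancel, add_sub_cancel_right] at h
      exact fun he => h (by rw [← he])
  · -- incident edges get distinct colors
    intro u v w hv hw hne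
    rcases ncases u v hv with rfl | rfl | rfl | rfl <;>
      rcases ncases u w hw with rfl | rfl | rfl | rfl
    · exact absurd rfl hne
    · rw [ce1, ce2]; exact (H3 u).1
    · rw [ce1, ce3]; exact (H3 u).2.1
    · rw [ce1, ce4]; exact (H3 u).2.2.1
    · rw [ce2, ce1]; exact (H3 u).1.symm
    · exact absurd rfl hne
    · rw [ce2, ce3]; exact (H3 u).2.2.2.1
    · rw [ce2, ce4]; exact (H3 u).2.2.2.2.1
    · rw [ce3, ce1]; exact (H3 u).2.1.symm
    · rw [ce3, ce2]; exact (H3 u).2.2.2.1.symm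
    · exact absurd rfl hne
    · rw [ce3, ce4]; exact (H3 u).2.2.2.2.2
    · rw [ce4, ce1]; exact (H3 u).2.2.1.symm
    · rw [ce4, ce2]; exact (H3 u).2.2.2.2.1.symm
    · rw [ce4, ce3]; exact (H3 u).2.2.2.2.2.symm
    · exact absurd rfl hne
  · -- edge vs endpoints
    intro u v hadj
    rcases ncases u v hadj with rfl | rfl | rfl | rfl
    · rw [ce1]; exact ⟨(H2 u).1, (H2 u).2.1⟩
    · rw [ce2]; exact ⟨(H2 u).2.2.1, (H2 u).2.2.2⟩
    · rw [ce3]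
      have h := H2 (u.1 - 1, u.2 - 1)
      refine ⟨?_, h.1⟩
      have h2 := h.2.1
      simp only [sub_add_cancel] at h2
      exact fun he => h2 (by rw [← he])
    · rw [ce4]
      have h := H2 (u.1 - 1, u.2 + 1)
      refine ⟨?_, h.2.2.1⟩
      have h2 := h.2.2.2
      simp only [sub_add_cancel, add_sub_cancel_right] at h2
      exact fun he => h2 (by rw [← he])
end Bridge


lemma main_coloring (m n : ℕ) (hm : 3 ≤ m) (hn : 3 ≤ n) (hm5 : 5 ≤ m) (hm7 : m ≠ 7) :
    HasTotalColoring (tensorProd (cycleGraph m) (cycleGraph n)) 5 := by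
  haveI : NeZero m := ⟨by omega⟩
  haveI : NeZero n := ⟨by omega⟩
  obtain ⟨A, S, hOk, hRel, hstep⟩ := seq_exists m hm5 hm7
  have key : ∀ a b : ZMod 5, b ≠ 0 → a ≠ a + b := by
    intro a b hb h
    exact hb (by linear_combination -h)
  refine bridge hm hn (fun x => A x.1) (fun x => A x.1 + (S x.1).2.1)
    (fun x => A x.1 + (S x.1).2.2) ?_ ?_ ?_
  · intro x
    constructor
    · show A x.1 ≠ A (x.1 + 1)
      rw [hstep x.1]
      exact key _ _ (hOk x.1).1
    · show A x.1 ≠ A (x.1 + 1)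
      rw [hstep x.1]
      exact key _ _ (hOk x.1).1
  · intro x
    refine ⟨?_, ?_, ?_, ?_⟩
    · show A x.1 + (S x.1).2.1 ≠ A x.1
      intro h
      exact (hOk x.1).2.1 (by linear_combination h)
    · show A x.1 + (S x.1).2.1 ≠ A (x.1 + 1)
      rw [hstep x.1]
      intro h
      exact (hOk x.1).2.2.2.1 (by linear_combination h)
    · show A x.1 + (S x.1).2.2 ≠ A x.1
      intro h
      exact (hOk x.1).2.2.1 (by linear_combination h)
    · show A x.1 + (S x.1).2.2 ≠ A (x.1 + 1)
      rw [hstep x.1]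
      intro h
      exact (hOk x.1).2.2.2.2.1 (by linear_combination h)
  · intro x
    have hAi : A x.1 = A (x.1 - 1) + (S (x.1 - 1)).1 := by
      have h := hstep (x.1 - 1)
      rwa [sub_add_cancel] at h
    have hrel : RelSt (S (x.1 - 1)) (S x.1) := by
      have h := hRel (x.1 - 1)
      rwa [sub_add_cancel] at h
    obtain ⟨r1, r2, r3, r4, r5, r6⟩ := hrel
    refine ⟨?_, ?_, ?_, ?_, ?_, ?_⟩
    · show A x.1 + (S x.1).2.1 ≠ A x.1 + (S x.1).2.2
      intro h; exact r1 (by linear_combination h)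
    · show A x.1 + (S x.1).2.1 ≠ A (x.1 - 1) + (S (x.1 - 1)).2.1
      rw [hAi]; intro h; exact r2 (by linear_combination h)
    · show A x.1 + (S x.1).2.1 ≠ A (x.1 - 1) + (S (x.1 - 1)).2.2
      rw [hAi]; intro h; exact r3 (by linear_combination h)
    · show A x.1 + (S x.1).2.2 ≠ A (x.1 - 1) + (S (x.1 - 1)).2.1
      rw [hAi]; intro h; exact r4 (by linear_combination h)
    · show A x.1 + (S x.1).2.2 ≠ A (x.1 - 1) + (S (x.1 - 1)).2.2
      rw [hAi]; intro h; exact r5 (by linear_combination h)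
    · show A (x.1 - 1) + (S (x.1 - 1)).2.1 ≠ A (x.1 - 1) + (S (x.1 - 1)).2.2
      intro h; exact r6 (by linear_combination h)

def cvT33 : Fin 3 × Fin 3 → ZMod 5 := fun x => ![![1, 1, 1], ![3, 0, 2], ![4, 4, 4]] x.1 x.2
def epT33 : Fin 3 × Fin 3 → ZMod 5 := fun x => ![![3, 0, 2], ![0, 2, 3], ![2, 3, 0]] x.1 x.2
def emT33 : Fin 3 × Fin 3 → ZMod 5 := fun x => ![![4, 4, 4], ![1, 1, 1], ![0, 2, 3]] x.1 x.2
def cvT34 : Fin 3 × Fin 4 → ZMod 5 := fun x => ![![2, 2, 2, 2], ![1, 3, 3, 1], ![0, 0, 0, 0]] x.1 x.2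
def epT34 : Fin 3 × Fin 4 → ZMod 5 := fun x => ![![0, 1, 0, 4], ![3, 2, 4, 2], ![4, 1, 1, 1]] x.1 x.2
def emT34 : Fin 3 × Fin 4 → ZMod 5 := fun x => ![![3, 0, 4, 0], ![2, 1, 2, 4], ![3, 4, 3, 3]] x.1 x.2
def cvT37 : Fin 3 × Fin 7 → ZMod 5 := fun x => ![![3, 3, 3, 4, 2, 3, 3], ![1, 1, 0, 1, 1, 1, 2], ![0, 4, 0, 4, 2, 0, 0]] x.1 x.2
def epT37 : Fin 3 × Fin 7 → ZMod 5 := fun x => ![![2, 4, 4, 0, 4, 0, 4], ![2, 4, 1, 0, 4, 2, 4], ![2, 1, 3, 0, 4, 2, 4]] x.1 x.2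
def emT37 : Fin 3 × Fin 7 → ZMod 5 := fun x => ![![1, 0, 0, 2, 3, 2, 0], ![3, 3, 3, 2, 3, 3, 3], ![1, 0, 1, 2, 1, 1, 1]] x.1 x.2
def cvT43 : Fin 4 × Fin 3 → ZMod 5 := fun x => ![![4, 2, 0], ![4, 2, 0], ![4, 1, 3], ![4, 1, 3]] x.1 x.2
def epT43 : Fin 4 × Fin 3 → ZMod 5 := fun x => ![![0, 3, 3], ![2, 4, 1], ![0, 0, 1], ![0, 4, 1]] x.1 x.2
def emT43 : Fin 4 × Fin 3 → ZMod 5 := fun x => ![![2, 1, 1], ![0, 3, 4], ![2, 3, 2], ![2, 3, 4]] x.1 x.2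
def cvT47 : Fin 4 × Fin 7 → ZMod 5 := fun x => ![![3, 0, 0, 1, 2, 2, 4], ![1, 2, 2, 3, 0, 0, 4], ![3, 0, 0, 1, 2, 2, 4], ![3, 2, 2, 1, 4, 0, 0]] x.1 x.2
def epT47 : Fin 4 × Fin 7 → ZMod 5 := fun x => ![![0, 3, 2, 3, 4, 0, 0], ![2, 3, 4, 1, 1, 1, 1], ![0, 3, 2, 3, 4, 4, 0], ![2, 3, 4, 3, 1, 3, 1]] x.1 x.2
def emT47 : Fin 4 × Fin 7 → ZMod 5 := fun x => ![![2, 4, 1, 0, 0, 4, 2], ![3, 4, 1, 4, 2, 3, 3], ![2, 4, 1, 0, 0, 0, 2], ![1, 4, 1, 4, 2, 1, 3]] x.1 x.2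
def cvT73 : Fin 7 × Fin 3 → ZMod 5 := fun x => ![![3, 2, 4], ![3, 2, 4], ![1, 0, 0], ![1, 2, 3], ![4, 2, 4], ![3, 2, 0], ![3, 1, 4]] x.1 x.2
def epT73 : Fin 7 × Fin 3 → ZMod 5 := fun x => ![![4, 1, 0], ![1, 3, 3], ![4, 4, 4], ![0, 0, 0], ![1, 3, 1], ![0, 0, 1], ![0, 3, 1]] x.1 x.2
def emT73 : Fin 7 × Fin 3 → ZMod 5 := fun x => ![![0, 4, 1], ![2, 0, 2], ![2, 3, 1], ![2, 3, 1], ![2, 4, 3], ![2, 4, 4], ![2, 2, 3]] x.1 x.2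
def cvT74 : Fin 7 × Fin 4 → ZMod 5 := fun x => ![![4, 4, 3, 1], ![3, 2, 3, 2], ![1, 2, 1, 2], ![1, 0, 1, 0], ![2, 3, 2, 3], ![2, 3, 2, 1], ![0, 1, 0, 1]] x.1 x.2
def epT74 : Fin 7 × Fin 4 → ZMod 5 := fun x => ![![1, 0, 1, 0], ![1, 0, 1, 0], ![4, 3, 3, 3], ![4, 1, 4, 1], ![4, 1, 3, 1], ![4, 2, 4, 2], ![3, 2, 3, 2]] x.1 x.2
def emT74 : Fin 7 × Fin 4 → ZMod 5 := fun x => ![![3, 2, 4, 2], ![4, 3, 4, 4], ![2, 0, 2, 0], ![2, 3, 2, 4], ![0, 0, 0, 0], ![3, 1, 3, 4], ![4, 0, 1, 0]] x.1 x.2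
def cvT77 : Fin 7 × Fin 7 → ZMod 5 := fun x => ![![2, 3, 0, 1, 1, 2, 2], ![4, 4, 4, 3, 3, 0, 1], ![3, 0, 1, 0, 1, 4, 2], ![3, 4, 4, 2, 2, 0, 2], ![1, 2, 3, 3, 1, 0, 4], ![0, 0, 0, 4, 2, 2, 3], ![4, 3, 2, 4, 0, 0, 4]] x.1 x.2
def epT77 : Fin 7 × Fin 7 → ZMod 5 := fun x => ![![1, 0, 1, 4, 4, 3, 0], ![3, 0, 1, 4, 0, 3, 0], ![1, 1, 4, 4, 3, 3, 0], ![1, 0, 2, 3, 3, 1, 0], ![3, 3, 2, 1, 4, 2, 3], ![1, 1, 1, 1, 3, 1, 0], ![1, 4, 0, 3, 4, 4, 3]] x.1 x.2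
def emT77 : Fin 7 × Fin 7 → ZMod 5 := fun x => ![![4, 2, 3, 3, 0, 1, 1], ![1, 2, 2, 2, 2, 2, 2], ![4, 4, 3, 3, 0, 1, 4], ![2, 2, 0, 1, 0, 2, 1], ![4, 4, 4, 4, 0, 4, 0], ![2, 2, 2, 3, 0, 3, 1], ![3, 0, 4, 2, 2, 2, 0]] x.1 x.2

set_option maxHeartbeats 2000000 in
lemma special33 : HasTotalColoring (tensorProd (cycleGraph 3) (cycleGraph 3)) 5 :=
  bridge (by norm_num) (by norm_num) cvT33 epT33 emT33 (by decide) (by decide) (by decide)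

set_option maxHeartbeats 2000000 in
lemma special34 : HasTotalColoring (tensorProd (cycleGraph 3) (cycleGraph 4)) 5 :=
  bridge (by norm_num) (by norm_num) cvT34 epT34 emT34 (by decide) (by decide) (by decide)

set_option maxHeartbeats 2000000 in
lemma special37 : HasTotalColoring (tensorProd (cycleGraph 3) (cycleGraph 7)) 5 :=
  bridge (by norm_num) (by norm_num) cvT37 epT37 emT37 (by decide) (by decide) (by decide)

set_option maxHeartbeats 2000000 in
lemma special43 : HasTotalColoring (tensorProd (cycleGraph 4) (cycleGraph 3)) 5 :=
  bridge (by norm_num) (by norm_num) cvT43 epT43 emT43 (by decide) (by decide) (by decide)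

set_option maxHeartbeats 2000000 in
lemma special47 : HasTotalColoring (tensorProd (cycleGraph 4) (cycleGraph 7)) 5 :=
  bridge (by norm_num) (by norm_num) cvT47 epT47 emT47 (by decide) (by decide) (by decide)

set_option maxHeartbeats 2000000 in
lemma special73 : HasTotalColoring (tensorProd (cycleGraph 7) (cycleGraph 3)) 5 :=
  bridge (by norm_num) (by norm_num) cvT73 epT73 emT73 (by decide) (by decide) (by decide)

set_option maxHeartbeats 2000000 in
lemma special74 : HasTotalColoring (tensorProd (cycleGraph 7) (cycleGraph 4)) 5 :=
  bridge (by norm_num) (by norm_num) cvT74 epT74 emT74 (by decide) (by decide) (by decide)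

set_option maxHeartbeats 2000000 in
lemma special77 : HasTotalColoring (tensorProd (cycleGraph 7) (cycleGraph 7)) 5 :=
  bridge (by norm_num) (by norm_num) cvT77 epT77 emT77 (by decide) (by decide) (by decide)


lemma swap_tc {V W : Type*} (G : SimpleGraph V) (H : SimpleGraph W) (k : ℕ)
    (h : HasTotalColoring (tensorProd G H) k) :
    HasTotalColoring (tensorProd H G) k := by
  obtain ⟨cv, ce, h1, h2, h3⟩ := h
  refine ⟨fun x => cv (x.2, x.1),
    fun s => ce (s.map (fun x : W × V => (x.2, x.1))), ?_, ?_, ?_⟩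
  · intro u v hadj
    exact h1 (u.2, u.1) (v.2, v.1) ⟨hadj.2, hadj.1⟩
  · intro u v w hv hw hne
    have h := h2 (u.2, u.1) (v.2, v.1) (w.2, w.1) ⟨hv.2, hv.1⟩ ⟨hw.2, hw.1⟩
      (fun hh => hne (by
        rw [Prod.ext_iff] at hh ⊢
        exact ⟨hh.2, hh.1⟩))
    simpa [Sym2.map_pair_eq] using h
  · intro u v hadj
    have h := h3 (u.2, u.1) (v.2, v.1) ⟨hadj.2, hadj.1⟩
    simpa [Sym2.map_pair_eq] using h


lemma lower_bound (m n : ℕ) (hm : 3 ≤ m) (hn : 3 ≤ n) (k : ℕ)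
    (h : HasTotalColoring (tensorProd (cycleGraph m) (cycleGraph n)) k) : 5 ≤ k := by
  haveI : NeZero m := ⟨by omega⟩
  haveI : NeZero n := ⟨by omega⟩
  obtain ⟨cv, ce, h1, h2, h3⟩ := h
  set u : Fin m × Fin n := (1, 1) with hu
  set v1 : Fin m × Fin n := (1 + 1, 1 + 1) with hv1
  set v2 : Fin m × Fin n := (1 + 1, 1 - 1) with hv2
  set v3 : Fin m × Fin n := (1 - 1, 1 - 1) with hv3
  set v4 : Fin m × Fin n := (1 - 1, 1 + 1) with hv4
  have ha1 : (tensorProd (cycleGraph m) (cycleGraph n)).Adj u v1 :=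
    ⟨(cyc_adj hm).mpr (Or.inl rfl), (cyc_adj hn).mpr (Or.inl rfl)⟩
  have ha2 : (tensorProd (cycleGraph m) (cycleGraph n)).Adj u v2 :=
    ⟨(cyc_adj hm).mpr (Or.inl rfl), (cyc_adj hn).mpr (Or.inr (sub_add_cancel 1 1).symm)⟩
  have ha3 : (tensorProd (cycleGraph m) (cycleGraph n)).Adj u v3 :=
    ⟨(cyc_adj hm).mpr (Or.inr (sub_add_cancel 1 1).symm),
     (cyc_adj hn).mpr (Or.inr (sub_add_cancel 1 1).symm)⟩
  have ha4 : (tensorProd (cycleGraph m) (cycleGraph n)).Adj u v4 :=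
    ⟨(cyc_adj hm).mpr (Or.inr (sub_add_cancel 1 1).symm), (cyc_adj hn).mpr (Or.inl rfl)⟩
  have dm : ((1 : Fin m) - 1) ≠ 1 + 1 := fin_sub_ne_add hm 1
  have dn : ((1 : Fin n) - 1) ≠ 1 + 1 := fin_sub_ne_add hn 1
  have d12 : v1 ≠ v2 := fun hh => dn (congrArg Prod.snd hh).symm
  have d13 : v1 ≠ v3 := fun hh => dm (congrArg Prod.fst hh).symm
  have d14 : v1 ≠ v4 := fun hh => dm (congrArg Prod.fst hh).symm
  have d23 : v2 ≠ v3 := fun hh => dm (congrArg Prod.fst hh).symm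
  have d24 : v2 ≠ v4 := fun hh => dm (congrArg Prod.fst hh).symm
  have d34 : v3 ≠ v4 := fun hh => dn (congrArg Prod.snd hh)
  have p12 := h2 u v1 v2 ha1 ha2 d12
  have p13 := h2 u v1 v3 ha1 ha3 d13
  have p14 := h2 u v1 v4 ha1 ha4 d14
  have p23 := h2 u v2 v3 ha2 ha3 d23
  have p24 := h2 u v2 v4 ha2 ha4 d24
  have p34 := h2 u v3 v4 ha3 ha4 d34
  have q1 := (h3 u v1 ha1).1
  have q2 := (h3 u v2 ha2).1
  have q3 := (h3 u v3 ha3).1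
  have q4 := (h3 u v4 ha4).1
  have hcard : ({cv u, ce s(u, v1), ce s(u, v2), ce s(u, v3), ce s(u, v4)} :
      Finset (Fin k)).card = 5 := by
    rw [Finset.card_insert_of_notMem (by
      simp only [Finset.mem_insert, Finset.mem_singleton]
      push_neg
      exact ⟨q1.symm, q2.symm, q3.symm, q4.symm⟩)]
    rw [Finset.card_insert_of_notMem (by
      simp only [Finset.mem_insert, Finset.mem_singleton]
      push_neg
      exact ⟨p12, p13, p14⟩)]
    rw [Finset.card_insert_of_notMem (by
      simp only [Finset.mem_insert, Finset.mem_singleton]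
      push_neg
      exact ⟨p23, p24⟩)]
    rw [Finset.card_insert_of_notMem (by
      simp only [Finset.mem_singleton]
      exact p34)]
    rw [Finset.card_singleton]
  have hle : ({cv u, ce s(u, v1), ce s(u, v2), ce s(u, v3), ce s(u, v4)} :
      Finset (Fin k)).card ≤ k := by
    calc _ ≤ (Finset.univ : Finset (Fin k)).card := Finset.card_le_univ _
    _ = k := by simp
  omega


theorem cycle_tensor_cycle_type1 (m n : ℕ) (hm : 3 ≤ m) (hn : 3 ≤ n)
    (h : ¬(m = 4 ∧ n = 4)) :
    totalChromaticNumber (tensorProd (cycleGraph m) (cycleGraph n)) = 5 := by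
  have hub : HasTotalColoring (tensorProd (cycleGraph m) (cycleGraph n)) 5 := by
    by_cases hm3 : m = 3 ∨ m = 4 ∨ m = 7
    · by_cases hn3 : n = 3 ∨ n = 4 ∨ n = 7
      · rcases hm3 with rfl | rfl | rfl <;> rcases hn3 with rfl | rfl | rfl
        · exact special33
        · exact special34
        · exact special37
        · exact special43
        · exact absurd ⟨rfl, rfl⟩ h
        · exact special47
        · exact special73
        · exact special74
        · exact special77
      · push_neg at hn3
        exact swap_tc _ _ _
          (main_coloring n m hn hm (by omega) (by omega))
    · push_neg at hm3
      exact main_coloring m n hm hn (by omega) (by omega)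
  have hlb : ∀ j ∈ {k | HasTotalColoring (tensorProd (cycleGraph m) (cycleGraph n)) k},
      5 ≤ j := fun j hj => lower_bound m n hm hn j hj
  exact le_antisymm (Nat.sInf_le hub) (le_csInf ⟨5, hub⟩ hlb)
end

section
/- The direct product of cycle graphs C_4 × C_4 has total chromatic number 6 (i.e., C_4 × C_4 is Type 2). -/
open SimpleGraph

abbrev GG := tensorProd (cycleGraph 4) (cycleGraph 4)
abbrev V4 := Fin 4 × Fin 4

def sideL (v : V4) : Bool := v.1.val % 2 = 0
def compL (v : V4) : Bool := (v.1.val + v.2.val) % 2 = 0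

lemma F1 : ∀ u v : V4, GG.Adj u v → compL u = compL v := by decide
lemma F2 : ∀ u v : V4, GG.Adj u v → sideL u = !sideL v := by decide
lemma F3 : ∀ u v : V4, compL u = compL v → sideL u ≠ sideL v → GG.Adj u v := by decide
lemma F4 : ∀ b s : Bool,
    ((Finset.univ : Finset V4).filter fun v => compL v = b ∧ sideL v = s).card = 4 := by decide

lemma keyBound (cv : V4 → Fin 5) (ce : Sym2 V4 → Fin 5)
    (h1 : ∀ u v, GG.Adj u v → cv u ≠ cv v)
    (h2 : ∀ u v w, GG.Adj u v → GG.Adj u w → v ≠ w → ce s(u, v) ≠ ce s(u, w))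
    (h3 : ∀ u v, GG.Adj u v → ce s(u, v) ≠ cv u ∧ ce s(u, v) ≠ cv v)
    (c : Fin 5) (b : Bool) :
    ((Finset.univ : Finset V4).filter fun v => (cv v, compL v) = (c, b)).card
    + (((Finset.univ : Finset (V4 × V4)).filter fun p => GG.Adj p.1 p.2 ∧ sideL p.1 = true).filter
        fun p => (ce s(p.1, p.2), compL p.1) = (c, b)).card ≤ 4 := by
  set A := (Finset.univ : Finset V4).filter fun v => (cv v, compL v) = (c, b) with hAdef
  set E := ((Finset.univ : Finset (V4 × V4)).filter fun p => GG.Adj p.1 p.2 ∧ sideL p.1 = true).filter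
      fun p => (ce s(p.1, p.2), compL p.1) = (c, b) with hEdef
  have hAmem : ∀ v ∈ A, cv v = c ∧ compL v = b := by
    intro v hv
    have := (Finset.mem_filter.mp hv).2
    exact ⟨(Prod.ext_iff.mp this).1, (Prod.ext_iff.mp this).2⟩
  have hEmem : ∀ p ∈ E, GG.Adj p.1 p.2 ∧ sideL p.1 = true ∧ ce s(p.1, p.2) = c ∧ compL p.1 = b := by
    intro p hp
    have h' := Finset.mem_filter.mp hp
    have h'' := (Finset.mem_filter.mp h'.1).2
    exact ⟨h''.1, h''.2, (Prod.ext_iff.mp h'.2).1, (Prod.ext_iff.mp h'.2).2⟩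
  by_cases hA : ∀ v ∈ A, sideL v = true
  · -- map E by fst into side true
    have hinj : Set.InjOn Prod.fst (E : Set (V4 × V4)) := by
      intro p hp q hq hpq
      have hp' := hEmem p hp; have hq' := hEmem q hq
      by_contra hne
      have h2' : p.2 ≠ q.2 := fun h => hne (Prod.ext hpq h)
      exact h2 p.1 p.2 q.2 hp'.1 (hpq ▸ hq'.1) h2'
        (by rw [hp'.2.2.1, hpq, hq'.2.2.1])
    have hdisj : Disjoint A (E.image Prod.fst) := by
      rw [Finset.disjoint_left]
      intro v hvA hvE
      obtain ⟨p, hp, rfl⟩ := Finset.mem_image.mp hvE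
      have hp' := hEmem p hp
      exact (h3 p.1 p.2 hp'.1).1 (by rw [hp'.2.2.1, (hAmem _ hvA).1])
    have hsub : A ∪ E.image Prod.fst ⊆
        (Finset.univ : Finset V4).filter fun v => compL v = b ∧ sideL v = true := by
      intro v hv
      rcases Finset.mem_union.mp hv with h | h
      · exact Finset.mem_filter.mpr ⟨Finset.mem_univ _, (hAmem _ h).2, hA _ h⟩
      · obtain ⟨p, hp, rfl⟩ := Finset.mem_image.mp h
        have hp' := hEmem p hp
        exact Finset.mem_filter.mpr ⟨Finset.mem_univ _, hp'.2.2.2, hp'.2.1⟩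
    calc A.card + E.card = A.card + (E.image Prod.fst).card := by
            rw [Finset.card_image_of_injOn hinj]
      _ = (A ∪ E.image Prod.fst).card := (Finset.card_union_of_disjoint hdisj).symm
      _ ≤ 4 := le_trans (Finset.card_le_card hsub) (le_of_eq (F4 b true))
  · -- some vertex of A on side false; then all of A on side false
    push_neg at hA
    obtain ⟨v0, hv0A, hv0s⟩ := hA
    have hv0s' : sideL v0 = false := by revert hv0s; cases sideL v0 <;> simp
    have hAside : ∀ v ∈ A, sideL v = false := by
      intro v hv
      by_contra hvs
      have hvs' : sideL v = true := by revert hvs; cases sideL v <;> simp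
      have hadj : GG.Adj v0 v := F3 v0 v ((hAmem _ hv0A).2.trans (hAmem _ hv).2.symm)
        (by rw [hv0s', hvs']; simp)
      exact h1 v0 v hadj (by rw [(hAmem _ hv0A).1, (hAmem _ hv).1])
    have hinj : Set.InjOn Prod.snd (E : Set (V4 × V4)) := by
      intro p hp q hq hpq
      have hp' := hEmem p hp; have hq' := hEmem q hq
      by_contra hne
      have h1' : p.1 ≠ q.1 := fun h => hne (Prod.ext h hpq)
      have e1 : ce s(p.2, p.1) = c := by rw [Sym2.eq_swap]; exact hp'.2.2.1
      have e2 : ce s(q.2, q.1) = c := by rw [Sym2.eq_swap]; exact hq'.2.2.1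
      exact h2 p.2 p.1 q.1 hp'.1.symm (hpq ▸ hq'.1.symm) h1'
        (by rw [← hpq] at e2; rw [e1, e2])
    have hdisj : Disjoint A (E.image Prod.snd) := by
      rw [Finset.disjoint_left]
      intro v hvA hvE
      obtain ⟨p, hp, rfl⟩ := Finset.mem_image.mp hvE
      have hp' := hEmem p hp
      exact (h3 p.1 p.2 hp'.1).2 (by rw [hp'.2.2.1, (hAmem _ hvA).1])
    have hsub : A ∪ E.image Prod.snd ⊆
        (Finset.univ : Finset V4).filter fun v => compL v = b ∧ sideL v = false := by
      intro v hv
      rcases Finset.mem_union.mp hv with h | h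
      · exact Finset.mem_filter.mpr ⟨Finset.mem_univ _, (hAmem _ h).2, hAside _ h⟩
      · obtain ⟨p, hp, rfl⟩ := Finset.mem_image.mp h
        have hp' := hEmem p hp
        refine Finset.mem_filter.mpr ⟨Finset.mem_univ _, ?_, ?_⟩
        · exact (F1 p.1 p.2 hp'.1).symm.trans hp'.2.2.2
        · have := F2 p.1 p.2 hp'.1
          rw [hp'.2.1] at this
          revert this; cases sideL p.2 <;> simp
    calc A.card + E.card = A.card + (E.image Prod.snd).card := by
            rw [Finset.card_image_of_injOn hinj]
      _ = (A ∪ E.image Prod.snd).card := (Finset.card_union_of_disjoint hdisj).symm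
      _ ≤ 4 := le_trans (Finset.card_le_card hsub) (le_of_eq (F4 b false))

lemma no5 : ¬ ∃ (cv : V4 → Fin 5) (ce : Sym2 V4 → Fin 5),
    (∀ u v, GG.Adj u v → cv u ≠ cv v) ∧
    (∀ u v w, GG.Adj u v → GG.Adj u w → v ≠ w → ce s(u, v) ≠ ce s(u, w)) ∧
    (∀ u v, GG.Adj u v → ce s(u, v) ≠ cv u ∧ ce s(u, v) ≠ cv v) := by
  rintro ⟨cv, ce, h1, h2, h3⟩
  have hV : (Finset.univ : Finset V4).card =
      ∑ q ∈ (Finset.univ : Finset (Fin 5 × Bool)),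
        ((Finset.univ : Finset V4).filter fun v => (cv v, compL v) = q).card :=
    Finset.card_eq_sum_card_fiberwise (fun x _ => Finset.mem_univ _)
  have hE : (((Finset.univ : Finset (V4 × V4)).filter
        fun p => GG.Adj p.1 p.2 ∧ sideL p.1 = true)).card =
      ∑ q ∈ (Finset.univ : Finset (Fin 5 × Bool)),
        (((Finset.univ : Finset (V4 × V4)).filter fun p => GG.Adj p.1 p.2 ∧ sideL p.1 = true).filter
          fun p => (ce s(p.1, p.2), compL p.1) = q).card :=
    Finset.card_eq_sum_card_fiberwise (fun x _ => Finset.mem_univ _)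
  have hVc : (Finset.univ : Finset V4).card = 16 := by decide
  have hEc : (((Finset.univ : Finset (V4 × V4)).filter
      fun p => GG.Adj p.1 p.2 ∧ sideL p.1 = true)).card = 32 := by decide
  have hsum : (48 : ℕ) ≤ ∑ q ∈ (Finset.univ : Finset (Fin 5 × Bool)), (4 : ℕ) := by
    calc (48 : ℕ) = 16 + 32 := by norm_num
      _ = ∑ q ∈ (Finset.univ : Finset (Fin 5 × Bool)),
            (((Finset.univ : Finset V4).filter fun v => (cv v, compL v) = q).card
            + (((Finset.univ : Finset (V4 × V4)).filter
                fun p => GG.Adj p.1 p.2 ∧ sideL p.1 = true).filter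
              fun p => (ce s(p.1, p.2), compL p.1) = q).card) := by
          rw [Finset.sum_add_distrib, ← hV, ← hE, hVc, hEc]
      _ ≤ ∑ q ∈ (Finset.univ : Finset (Fin 5 × Bool)), (4 : ℕ) :=
          Finset.sum_le_sum fun q _ => keyBound cv ce h1 h2 h3 q.1 q.2
  simp at hsum

def cvUp (v : V4) : Fin 6 := if v.1.val % 2 = 0 then 4 else 5
def feUp (x y : V4) : Fin 6 :=
  (if x.1 + y.1 = (1 : Fin 4) then 0 else 2) + (if x.2 + y.2 = (1 : Fin 4) then 0 else 1)
def ceUp : Sym2 V4 → Fin 6 :=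
  Sym2.lift ⟨fun x y => feUp x y, by intro x y; simp [feUp, add_comm]⟩

theorem c4_tensor_c4_type2 :
    totalChromaticNumber (tensorProd (cycleGraph 4) (cycleGraph 4)) = 6 := by
  have h6 : HasTotalColoring (tensorProd (cycleGraph 4) (cycleGraph 4)) 6 := by
    refine ⟨cvUp, ceUp, ?_, ?_, ?_⟩ <;> decide
  have hnot : ∀ k, k ≤ 5 → ¬ HasTotalColoring (tensorProd (cycleGraph 4) (cycleGraph 4)) k := by
    rintro k hk ⟨cv, ce, h1, h2, h3⟩
    refine no5 ⟨fun v => Fin.castLE hk (cv v), fun e => Fin.castLE hk (ce e), ?_, ?_, ?_⟩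
    · intro u v hadj heq
      exact h1 u v hadj (Fin.castLE_injective hk heq)
    · intro u v w h h' hne heq
      exact h2 u v w h h' hne (Fin.castLE_injective hk heq)
    · intro u v hadj
      exact ⟨fun heq => (h3 u v hadj).1 (Fin.castLE_injective hk heq),
        fun heq => (h3 u v hadj).2 (Fin.castLE_injective hk heq)⟩
  have hmem : 6 ∈ {k | HasTotalColoring (tensorProd (cycleGraph 4) (cycleGraph 4)) k} := h6
  refine le_antisymm (Nat.sInf_le hmem) (le_csInf ⟨6, hmem⟩ ?_)
  intro k hk
  by_contra hlt
  exact hnot k (by omega) hk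
end

section
/- Let G be a finite nonempty simple graph. If G is Type 1, i.e., χ_T(G) = Δ(G) + 1, then the direct product G × K_2 is Type 1, i.e., χ_T(G × K_2) = Δ(G × K_2) + 1 = Δ(G) + 1. -/
open SimpleGraph

/-- In `Fin 2`, `j ≠ i` iff `j = i + 1`. -/
lemma fin2_ne_iff (i j : Fin 2) : j ≠ i ↔ j = i + 1 := by
  revert i j; decide

lemma tensor_degree {V : Type*} [Fintype V] (G : SimpleGraph V) [DecidableRel G.Adj]
    (u : V) (i : Fin 2) :
    (tensorProd G (⊤ : SimpleGraph (Fin 2))).degree (u, i) = G.degree u := by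
  classical
  have hset : (tensorProd G (⊤ : SimpleGraph (Fin 2))).neighborFinset (u, i)
      = (G.neighborFinset u) ×ˢ ({i + 1} : Finset (Fin 2)) := by
    ext ⟨v, j⟩
    simp only [mem_neighborFinset, Finset.mem_product, Finset.mem_singleton]
    show (G.Adj u v ∧ (⊤ : SimpleGraph (Fin 2)).Adj i j) ↔ _
    rw [top_adj]
    constructor
    · rintro ⟨h1, h2⟩
      exact ⟨h1, (fin2_ne_iff i j).mp (Ne.symm h2)⟩
    · rintro ⟨h1, h2⟩
      exact ⟨h1, Ne.symm ((fin2_ne_iff i j).mpr h2)⟩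
  rw [SimpleGraph.degree, hset, Finset.card_product, Finset.card_singleton, mul_one]
  rfl

/-- Lower bound: any total coloring needs at least `Δ + 1` colors. -/
lemma maxDegree_lt_of_hasTotalColoring {V : Type*} [Fintype V] [Nonempty V]
    (G : SimpleGraph V) [DecidableRel G.Adj] {k : ℕ} (h : HasTotalColoring G k) :
    G.maxDegree + 1 ≤ k := by
  classical
  obtain ⟨cv, ce, h1, h2, h3⟩ := h
  obtain ⟨u, hu⟩ := G.exists_maximal_degree_vertex
  set s : Finset (Fin k) :=
    insert (cv u) ((G.neighborFinset u).image fun v => ce s(u, v)) with hs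
  have himg : ((G.neighborFinset u).image fun v => ce s(u, v)).card = G.degree u := by
    rw [Finset.card_image_of_injOn, SimpleGraph.degree]
    intro v hv w hw hvw
    by_contra hne
    exact h2 u v w (by simpa using hv) (by simpa using hw) hne hvw
  have hnotmem : cv u ∉ (G.neighborFinset u).image fun v => ce s(u, v) := by
    intro hmem
    obtain ⟨v, hv, hvv⟩ := Finset.mem_image.mp hmem
    exact (h3 u v (by simpa using hv)).1 hvv
  have hcard : s.card = G.maxDegree + 1 := by
    rw [hs, Finset.card_insert_of_notMem hnotmem, himg, ← hu]
  calc G.maxDegree + 1 = s.card := hcard.symm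
    _ ≤ Fintype.card (Fin k) := Finset.card_le_univ s
    _ = k := Fintype.card_fin k

theorem type1_tensor_K2 {V : Type*} [Fintype V] [Nonempty V]
    (G : SimpleGraph V) [DecidableRel G.Adj]
    (hG : totalChromaticNumber G = G.maxDegree + 1) :
    totalChromaticNumber (tensorProd G (⊤ : SimpleGraph (Fin 2))) =
        (tensorProd G (⊤ : SimpleGraph (Fin 2))).maxDegree + 1 ∧
      (tensorProd G (⊤ : SimpleGraph (Fin 2))).maxDegree = G.maxDegree := by
  classical
  set T := tensorProd G (⊤ : SimpleGraph (Fin 2)) with hT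
  -- maxDegree equality
  have hmax : T.maxDegree = G.maxDegree := by
    apply le_antisymm
    · apply SimpleGraph.maxDegree_le_of_forall_degree_le
      rintro ⟨u, i⟩
      rw [tensor_degree G u i]
      exact G.degree_le_maxDegree u
    · obtain ⟨u, hu⟩ := G.exists_maximal_degree_vertex
      calc G.maxDegree = T.degree (u, 0) := by rw [tensor_degree G u 0, hu]
        _ ≤ T.maxDegree := T.degree_le_maxDegree (u, 0)
  -- G has a total coloring with Δ+1 colors
  have hne : {k | HasTotalColoring G k}.Nonempty := by
    by_contra hcon
    rw [Set.not_nonempty_iff_eq_empty] at hcon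
    rw [totalChromaticNumber, hcon, Nat.sInf_empty] at hG
    omega
  have hmem : HasTotalColoring G (G.maxDegree + 1) := by
    have := Nat.sInf_mem hne
    rwa [show sInf {k | HasTotalColoring G k} = G.maxDegree + 1 from hG] at this
  -- transfer the coloring to T
  obtain ⟨cv, ce, h1, h2, h3⟩ := hmem
  have hmemT : HasTotalColoring T (G.maxDegree + 1) := by
    refine ⟨fun p => cv p.1, fun e => ce (e.map Prod.fst), ?_, ?_, ?_⟩
    · rintro ⟨u, i⟩ ⟨v, j⟩ hadj
      exact h1 u v hadj.1
    · rintro ⟨u, i⟩ ⟨v, j⟩ ⟨w, j'⟩ hadj1 hadj2 hne'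
      have hij : j ≠ i := Ne.symm (hadj1.2 : (⊤ : SimpleGraph (Fin 2)).Adj i j).ne
      have hij' : j' ≠ i := Ne.symm (hadj2.2 : (⊤ : SimpleGraph (Fin 2)).Adj i j').ne
      have hjj : j = j' := by
        rw [fin2_ne_iff] at hij hij'; rw [hij, hij']
      have hvw : v ≠ w := by
        intro hvw; exact hne' (by rw [hvw, hjj])
      simpa [Sym2.map_pair_eq] using h2 u v w hadj1.1 hadj2.1 hvw
    · rintro ⟨u, i⟩ ⟨v, j⟩ hadj
      have := h3 u v hadj.1
      simpa [Sym2.map_pair_eq] using this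
  refine ⟨?_, hmax⟩
  rw [hmax]
  apply le_antisymm
  · exact Nat.sInf_le hmemT
  · rw [totalChromaticNumber]
    apply le_csInf ⟨G.maxDegree + 1, by exact hmemT⟩
    intro k hk
    have hk' : HasTotalColoring T k := hk
    have : T.maxDegree + 1 ≤ k := maxDegree_lt_of_hasTotalColoring T hk'
    omega
end

section
/- Let G be a finite nonempty simple graph that is Type 1, i.e., χ_T(G) = Δ(G) + 1, and let H be a finite nonempty bipartite simple graph. Then the direct product G × H is Type 1, i.e., χ_T(G × H) = Δ(G × H) + 1. -/
open SimpleGraph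

set_option linter.unusedSectionVars false

open SimpleGraph Finset

section MatrixLemmas

variable {n : ℕ}

private lemma all_eq_of_sum_ge {k : ℕ} {f : Fin n → ℕ} (h : ∀ i, f i ≤ k)
    (htot : k * n ≤ ∑ i, f i) : ∀ i, f i = k := by
  have hkn : k * n = n * k := Nat.mul_comm k n
  by_contra hne
  push_neg at hne
  obtain ⟨i0, hi0⟩ := hne
  have hlt : ∑ i, f i < ∑ _i : Fin n, k := by
    apply Finset.sum_lt_sum (fun i _ => h i) ⟨i0, Finset.mem_univ _, lt_of_le_of_ne (h i0) hi0⟩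
  simp only [Finset.sum_const, Finset.card_univ, Fintype.card_fin, smul_eq_mul] at hlt
  omega

private lemma exists_regular_superform (k : ℕ) :
    ∀ (t : ℕ) (M : Fin n → Fin n → ℕ), (∀ i, ∑ j, M i j ≤ k) → (∀ j, ∑ i, M i j ≤ k) →
    k * n ≤ (∑ i, ∑ j, M i j) + t →
    ∃ M' : Fin n → Fin n → ℕ, (∀ i j, M i j ≤ M' i j) ∧ (∀ i, ∑ j, M' i j = k) ∧
      (∀ j, ∑ i, M' i j = k) := by
  intro t
  induction t with
  | zero =>
    intro M hr hc htot
    rw [Nat.add_zero] at htot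
    refine ⟨M, fun i j => le_rfl, all_eq_of_sum_ge hr htot, ?_⟩
    have hcomm : ∑ j, ∑ i, M i j = ∑ i, ∑ j, M i j := Finset.sum_comm
    exact all_eq_of_sum_ge hc (by omega)
  | succ t ih =>
    intro M hr hc htot
    have hkn : k * n = n * k := Nat.mul_comm k n
    by_cases hrow : ∀ i, ∑ j, M i j = k
    · refine ⟨M, fun i j => le_rfl, hrow, ?_⟩
      have h1 : ∑ i, ∑ j, M i j = k * n := by
        simp [hrow, Finset.sum_const, Finset.card_univ, mul_comm]
      have hcomm : ∑ j, ∑ i, M i j = ∑ i, ∑ j, M i j := Finset.sum_comm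
      exact all_eq_of_sum_ge hc (by omega)
    · push_neg at hrow
      obtain ⟨i0, hi0⟩ := hrow
      have hi0' : ∑ j, M i0 j < k := lt_of_le_of_ne (hr i0) hi0
      have hlt : ∑ i, ∑ j, M i j < k * n := by
        have := Finset.sum_lt_sum (fun i (_ : i ∈ Finset.univ) => hr i)
          ⟨i0, Finset.mem_univ _, hi0'⟩
        simp only [Finset.sum_const, Finset.card_univ, Fintype.card_fin, smul_eq_mul] at this
        omega
      have hcol : ∃ j0, ∑ i, M i j0 < k := by
        by_contra hco
        push_neg at hco
        have hco' : ∀ j, ∑ i, M i j = k := fun j => le_antisymm (hc j) (hco j)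
        have h1 : ∑ j, ∑ i, M i j = k * n := by
          simp [hco', Finset.sum_const, Finset.card_univ, mul_comm]
        have hcomm : ∑ j, ∑ i, M i j = ∑ i, ∑ j, M i j := Finset.sum_comm
        omega
      obtain ⟨j0, hj0⟩ := hcol
      set M1 : Fin n → Fin n → ℕ := fun i j => M i j + (if i = i0 ∧ j = j0 then 1 else 0)
        with hM1
      have hrow1 : ∀ i, ∑ j, M1 i j = ∑ j, M i j + (if i = i0 then 1 else 0) := by
        intro i
        rw [Finset.sum_add_distrib]
        congr 1
        by_cases hi : i = i0 <;> simp [hi]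
      have hcol1 : ∀ j, ∑ i, M1 i j = ∑ i, M i j + (if j = j0 then 1 else 0) := by
        intro j
        rw [Finset.sum_add_distrib]
        congr 1
        by_cases hj : j = j0 <;> simp [hj]
      have htot1 : ∑ i, ∑ j, M1 i j = (∑ i, ∑ j, M i j) + 1 := by
        calc ∑ i, ∑ j, M1 i j = ∑ i, (∑ j, M i j + (if i = i0 then 1 else 0)) := by
              exact Finset.sum_congr rfl fun i _ => hrow1 i
          _ = (∑ i, ∑ j, M i j) + ∑ i, (if i = i0 then 1 else 0) := Finset.sum_add_distrib
          _ = (∑ i, ∑ j, M i j) + 1 := by simp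
      obtain ⟨M', hle, hr', hc'⟩ := ih M1
        (fun i => by
          rw [hrow1 i]
          split_ifs with hi
          · subst hi; omega
          · have := hr i; omega)
        (fun j => by
          rw [hcol1 j]
          split_ifs with hj
          · subst hj; omega
          · have := hc j; omega)
        (by omega)
      exact ⟨M', fun i j => le_trans (by simp [hM1]) (hle i j), hr', hc'⟩

private lemma exists_perm_pos {k : ℕ} (hk : 0 < k) (M : Fin n → Fin n → ℕ)
    (hr : ∀ i, ∑ j, M i j = k) (hc : ∀ j, ∑ i, M i j = k) :
    ∃ σ : Equiv.Perm (Fin n), ∀ i, 0 < M i (σ i) := by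
  classical
  set t : Fin n → Finset (Fin n) := fun i => Finset.univ.filter (fun j => 0 < M i j) with ht
  have hall : ∀ s : Finset (Fin n), s.card ≤ (s.biUnion t).card := by
    intro s
    set B := s.biUnion t with hB
    have h2 : ∀ i ∈ s, ∑ j, M i j = ∑ j ∈ B, M i j := by
      intro i hi
      refine (Finset.sum_subset (Finset.subset_univ B) ?_).symm
      intro j _ hj
      by_contra hpos
      exact hj (Finset.mem_biUnion.mpr ⟨i, hi, by simp [ht]; omega⟩)
    have key : k * s.card ≤ k * B.card := by
      calc k * s.card = ∑ _i ∈ s, k := by simp [mul_comm]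
        _ = ∑ i ∈ s, ∑ j ∈ B, M i j := by
            refine Finset.sum_congr rfl fun i hi => ?_
            rw [← h2 i hi, hr i]
        _ = ∑ j ∈ B, ∑ i ∈ s, M i j := Finset.sum_comm
        _ ≤ ∑ j ∈ B, ∑ i, M i j := by
            refine Finset.sum_le_sum fun j _ => ?_
            exact Finset.sum_le_sum_of_subset (Finset.subset_univ s)
        _ = ∑ _j ∈ B, k := by exact Finset.sum_congr rfl fun j _ => hc j
        _ = k * B.card := by simp [mul_comm]
    exact Nat.le_of_mul_le_mul_left key hk
  obtain ⟨f, hinj, hmem⟩ := (Finset.all_card_le_biUnion_card_iff_exists_injective t).mp hall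
  refine ⟨Equiv.ofBijective f (Finite.injective_iff_bijective.mp hinj), fun i => ?_⟩
  have := hmem i
  simp only [ht, Finset.mem_filter] at this
  exact this.2

private lemma exists_perm_decomp :
    ∀ (k : ℕ) (M : Fin n → Fin n → ℕ), (∀ i, ∑ j, M i j = k) → (∀ j, ∑ i, M i j = k) →
    ∃ σ : Fin k → Equiv.Perm (Fin n), ∀ i j, 0 < M i j → ∃ t, σ t i = j := by
  intro k
  induction k with
  | zero =>
    intro M hr _
    refine ⟨fun t => t.elim0, fun i j hpos => absurd hpos ?_⟩
    have hle : M i j ≤ ∑ j', M i j' :=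
      Finset.single_le_sum (fun j' _ => Nat.zero_le _) (Finset.mem_univ j)
    rw [hr i] at hle
    omega
  | succ k ih =>
    intro M hr hc
    obtain ⟨σ0, hσ0⟩ := exists_perm_pos (Nat.succ_pos k) M hr hc
    set M' : Fin n → Fin n → ℕ := fun i j => M i j - (if σ0 i = j then 1 else 0) with hM'
    have hMeq : ∀ i j, M i j = M' i j + (if σ0 i = j then 1 else 0) := by
      intro i j
      by_cases h : σ0 i = j
      · have : 0 < M i j := h ▸ hσ0 i
        simp only [hM', h, if_true]
        omega
      · simp [hM', h]
    have hrow' : ∀ i, ∑ j, M' i j = k := by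
      intro i
      have h1 : ∑ j, M i j = ∑ j, M' i j + ∑ j, (if σ0 i = j then 1 else 0) := by
        rw [← Finset.sum_add_distrib]
        exact Finset.sum_congr rfl fun j _ => hMeq i j
      have h2 : ∑ j, (if σ0 i = j then 1 else 0) = 1 := by simp
      have := hr i
      omega
    have hcol' : ∀ j, ∑ i, M' i j = k := by
      intro j
      have h1 : ∑ i, M i j = ∑ i, M' i j + ∑ i, (if σ0 i = j then 1 else 0) := by
        rw [← Finset.sum_add_distrib]
        exact Finset.sum_congr rfl fun i _ => hMeq i j
      have h2 : ∑ i, (if σ0 i = j then 1 else 0) = 1 := by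
        have : ∀ i, (σ0 i = j) ↔ (i = σ0.symm j) := by
          intro i
          constructor
          · intro h; rw [← h]; simp
          · intro h; rw [h]; simp
        calc ∑ i, (if σ0 i = j then 1 else 0)
            = ∑ i, (if i = σ0.symm j then 1 else 0) := by
              exact Finset.sum_congr rfl fun i _ => by rw [if_congr (this i) rfl rfl]
          _ = 1 := by simp
      have := hc j
      omega
    obtain ⟨σ', hσ'⟩ := ih M' hrow' hcol'
    refine ⟨Fin.cases σ0 σ', fun i j hpos => ?_⟩
    by_cases h : σ0 i = j
    · exact ⟨0, by simpa using h⟩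
    · have hpos' : 0 < M' i j := by
        have := hMeq i j
        simp only [h, if_false] at this
        omega
      obtain ⟨t, ht⟩ := hσ' i j hpos'
      exact ⟨t.succ, by simpa using ht⟩

end MatrixLemmas

/-- König's edge coloring theorem for bipartite graphs. -/
theorem koenig_edge_coloring {T : Type*} [Fintype T] (B : SimpleGraph T) [DecidableRel B.Adj]
    (b : T → Fin 2) (hb : ∀ x y, B.Adj x y → b x ≠ b y) (k : ℕ) (hk0 : 0 < k)
    (hk : ∀ v, B.degree v ≤ k) :
    ∃ ce : Sym2 T → Fin k, ∀ u v w, B.Adj u v → B.Adj u w → v ≠ w →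
      ce s(u, v) ≠ ce s(u, w) := by
  classical
  set n := Fintype.card T with hn
  set e := Fintype.equivFin T with he
  set A : Fin n → Fin n → ℕ := fun i j =>
    if B.Adj (e.symm i) (e.symm j) ∧ b (e.symm i) = 0 ∧ b (e.symm j) = 1 then 1 else 0 with hA
  have hrow : ∀ i, ∑ j, A i j ≤ k := by
    intro i
    have h1 : ∑ j, A i j = (Finset.univ.filter fun j =>
        B.Adj (e.symm i) (e.symm j) ∧ b (e.symm i) = 0 ∧ b (e.symm j) = 1).card := by
      simp [hA]
      convert rfl
    rw [h1]
    refine le_trans ?_ (hk (e.symm i))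
    refine Finset.card_le_card_of_injOn (fun j => e.symm j) ?_ ?_
    · intro j hj
      simp only [Finset.mem_coe, Finset.mem_filter] at hj
      exact (B.mem_neighborFinset _ _).mpr hj.2.1
    · intro a _ c _ hac
      exact e.symm.injective hac
  have hcol : ∀ j, ∑ i, A i j ≤ k := by
    intro j
    have h1 : ∑ i, A i j = (Finset.univ.filter fun i =>
        B.Adj (e.symm i) (e.symm j) ∧ b (e.symm i) = 0 ∧ b (e.symm j) = 1).card := by
      simp [hA]
      convert rfl
    rw [h1]
    refine le_trans ?_ (hk (e.symm j))
    refine Finset.card_le_card_of_injOn (fun i => e.symm i) ?_ ?_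
    · intro i hi
      simp only [Finset.mem_coe, Finset.mem_filter] at hi
      exact (B.mem_neighborFinset _ _).mpr hi.2.1.symm
    · intro a _ c _ hac
      exact e.symm.injective hac
  obtain ⟨M, hMA, hMr, hMc⟩ := exists_regular_superform k (k * n) A hrow hcol (by omega)
  obtain ⟨σ, hσ⟩ := exists_perm_decomp k M hMr hMc
  have cover : ∀ x y, B.Adj x y → b x = 0 → b y = 1 → ∃ t, σ t (e x) = e y := by
    intro x y hxy hx hy
    apply hσ
    have h1 : A (e x) (e y) = 1 := by
      simp only [hA, Equiv.symm_apply_apply]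
      rw [if_pos ⟨hxy, hx, hy⟩]
    have := hMA (e x) (e y)
    omega
  set g : T → T → Fin k := fun x y =>
    if h : ∃ t : Fin k, σ t (e x) = e y then h.choose else ⟨0, hk0⟩ with hg
  have hg_spec : ∀ x y (h : ∃ t, σ t (e x) = e y), σ (g x y) (e x) = e y := by
    intro x y h
    simp only [hg, dif_pos h]
    exact h.choose_spec
  have h01 : ∀ z : Fin 2, z = 0 ∨ z = 1 := by decide
  set f : T → T → Fin k := fun x y =>
    if b x = 0 ∧ b y = 1 then g x y else if b y = 0 ∧ b x = 1 then g y x else ⟨0, hk0⟩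
    with hf
  have hfsymm : ∀ x y, f x y = f y x := by
    intro x y
    simp only [hf]
    rcases h01 (b x) with hx | hx <;> rcases h01 (b y) with hy | hy <;>
      simp [hx, hy]
  refine ⟨Sym2.lift ⟨fun x y => f x y, hfsymm⟩, ?_⟩
  intro u v w huv huw hvw
  simp only [Sym2.lift_mk]
  rcases h01 (b u) with hu | hu
  · have hv : b v = 1 := by
      rcases h01 (b v) with h | h
      · exact absurd (hu.trans h.symm) (hb u v huv)
      · exact h
    have hw : b w = 1 := by
      rcases h01 (b w) with h | h
      · exact absurd (hu.trans h.symm) (hb u w huw)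
      · exact h
    have hfv : f u v = g u v := by simp [hf, hu, hv]
    have hfw : f u w = g u w := by simp [hf, hu, hw]
    rw [hfv, hfw]
    intro heq
    have h1 := hg_spec u v (cover u v huv hu hv)
    have h2 := hg_spec u w (cover u w huw hu hw)
    rw [heq] at h1
    exact hvw (e.injective (h1.symm.trans h2))
  · have hv : b v = 0 := by
      rcases h01 (b v) with h | h
      · exact h
      · exact absurd (hu.trans h.symm) (hb u v huv)
    have hw : b w = 0 := by
      rcases h01 (b w) with h | h
      · exact h
      · exact absurd (hu.trans h.symm) (hb u w huw)
    have hfv : f u v = g v u := by simp [hf, hu, hv]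
    have hfw : f u w = g w u := by simp [hf, hu, hw]
    rw [hfv, hfw]
    intro heq
    have h1 := hg_spec v u (cover v u huv.symm hv hu)
    have h2 := hg_spec w u (cover w u huw.symm hw hu)
    rw [heq] at h1
    exact hvw (e.injective ((σ (g w u)).injective (h1.trans h2.symm)))

section TensorFacts

open SimpleGraph

variable {V W : Type*} [Fintype V] [Fintype W]
  (G : SimpleGraph V) (H : SimpleGraph W) [DecidableRel G.Adj] [DecidableRel H.Adj]

lemma tensor_adj (x y : V × W) : (tensorProd G H).Adj x y ↔ G.Adj x.1 y.1 ∧ H.Adj x.2 y.2 :=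
  Iff.rfl

lemma tensor_neighborFinset (x : V × W) :
    (tensorProd G H).neighborFinset x = (G.neighborFinset x.1) ×ˢ (H.neighborFinset x.2) := by
  ext y
  simp [SimpleGraph.mem_neighborFinset, Finset.mem_product, tensor_adj]

lemma tensor_degree_s4 (x : V × W) :
    (tensorProd G H).degree x = G.degree x.1 * H.degree x.2 := by
  classical
  rw [← SimpleGraph.card_neighborFinset_eq_degree, tensor_neighborFinset,
    Finset.card_product, SimpleGraph.card_neighborFinset_eq_degree,
    SimpleGraph.card_neighborFinset_eq_degree]

lemma tensor_maxDegree [Nonempty V] [Nonempty W] :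
    (tensorProd G H).maxDegree = G.maxDegree * H.maxDegree := by
  classical
  apply le_antisymm
  · obtain ⟨x, hx⟩ := (tensorProd G H).exists_maximal_degree_vertex
    rw [hx, tensor_degree_s4]
    exact Nat.mul_le_mul (G.degree_le_maxDegree x.1) (H.degree_le_maxDegree x.2)
  · obtain ⟨u, hu⟩ := G.exists_maximal_degree_vertex
    obtain ⟨w, hw⟩ := H.exists_maximal_degree_vertex
    have := (tensorProd G H).degree_le_maxDegree (u, w)
    rw [tensor_degree_s4] at this
    simpa [← hu, ← hw] using this

end TensorFacts

section Main

open SimpleGraph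

lemma totalColoring_lower_bound {X : Type*} [Fintype X] [Nonempty X] (J : SimpleGraph X)
    [DecidableRel J.Adj] {k : ℕ} (h : HasTotalColoring J k) : J.maxDegree + 1 ≤ k := by
  classical
  obtain ⟨cv, ce, h1, h2, h3⟩ := h
  obtain ⟨x, hx⟩ := J.exists_maximal_degree_vertex
  set F : Finset (Fin k) :=
    insert (cv x) ((J.neighborFinset x).image fun y => ce s(x, y)) with hF
  have hinj : Set.InjOn (fun y => ce s(x, y)) (J.neighborFinset x) := by
    intro y hy z hz hyz
    by_contra hne
    exact h2 x y z ((J.mem_neighborFinset x y).mp hy) ((J.mem_neighborFinset x z).mp hz)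
      hne hyz
  have hnotmem : cv x ∉ (J.neighborFinset x).image fun y => ce s(x, y) := by
    intro hmem
    obtain ⟨y, hy, hyeq⟩ := Finset.mem_image.mp hmem
    exact (h3 x y ((J.mem_neighborFinset x y).mp hy)).1 hyeq
  have hcard : F.card = J.degree x + 1 := by
    rw [hF, Finset.card_insert_of_notMem hnotmem, Finset.card_image_of_injOn hinj]
    rfl
  have hle : F.card ≤ k := by
    have := Finset.card_le_univ F
    simpa using this
  omega

lemma hasTotalColoring_one {X : Type*} (J : SimpleGraph X) (hne : ∀ x y, ¬ J.Adj x y) :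
    HasTotalColoring J 1 :=
  ⟨fun _ => 0, fun _ => 0, fun u v h => absurd h (hne u v),
   fun u v _ h => absurd h (hne u v), fun u v h => absurd h (hne u v)⟩

lemma no_adj_of_maxDegree_zero {X : Type*} [Fintype X] (J : SimpleGraph X)
    [DecidableRel J.Adj] (h : J.maxDegree = 0) : ∀ x y, ¬ J.Adj x y := by
  intro x y hxy
  have hmem : y ∈ J.neighborFinset x := (J.mem_neighborFinset x y).mpr hxy
  have hpos : 0 < J.degree x := Finset.card_pos.mpr ⟨y, hmem⟩
  have := J.degree_le_maxDegree x
  omega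

lemma main_construction {V W : Type*} [Fintype V] [Fintype W] [Nonempty V] [Nonempty W]
    (G : SimpleGraph V) (H : SimpleGraph W) [DecidableRel G.Adj] [DecidableRel H.Adj]
    (hGcol : HasTotalColoring G (G.maxDegree + 1))
    (b : W → Fin 2) (hb : ∀ x y, H.Adj x y → b x ≠ b y)
    (hm : 0 < G.maxDegree) (hd : 0 < H.maxDegree) :
    HasTotalColoring (tensorProd G H) (G.maxDegree * H.maxDegree + 1) := by
  classical
  set m := G.maxDegree with hmdef
  set d := H.maxDegree with hddef
  set N := m * d + 1 with hNdef
  obtain ⟨cvG, ceG, hG1, hG2, hG3⟩ := hGcol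
  obtain ⟨eH, heH⟩ := koenig_edge_coloring H b hb d hd (fun v => H.degree_le_maxDegree v)
  haveI : DecidableRel (⊤ : SimpleGraph (Fin 2)).Adj := fun x y =>
    decidable_of_iff (x ≠ y) (by simp)
  set D := tensorProd G (⊤ : SimpleGraph (Fin 2)) with hDdef
  have htopdeg : ∀ s : Fin 2, (⊤ : SimpleGraph (Fin 2)).degree s = 1 := by
    intro s
    have hnb : (⊤ : SimpleGraph (Fin 2)).neighborFinset s = {s}ᶜ := by
      ext y
      simp [SimpleGraph.mem_neighborFinset, ne_comm]
    rw [← SimpleGraph.card_neighborFinset_eq_degree, hnb]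
    rw [Finset.card_compl]
    simp
  have hDdeg : ∀ x : V × Fin 2, D.degree x ≤ m := by
    intro x
    show (tensorProd G (⊤ : SimpleGraph (Fin 2))).degree x ≤ m
    rw [tensor_degree_s4, htopdeg, Nat.mul_one]
    exact G.degree_le_maxDegree x.1
  have hDbip : ∀ x y : V × Fin 2, D.Adj x y → x.2 ≠ y.2 := by
    intro x y hxy
    have := hxy.2
    simpa using this
  obtain ⟨ceD, hceD⟩ := koenig_edge_coloring D (fun x => x.2) hDbip m hm hDdeg
  have hmN : m + 1 ≤ N := by
    have : m * 1 ≤ m * d := Nat.mul_le_mul_left m hd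
    omega
  set cv : V × W → Fin N := fun x => ⟨(cvG x.1 : ℕ), by
    have := (cvG x.1).isLt
    omega⟩ with hcvdef
  set ceVal : (V × W) → (V × W) → ℕ := fun x y =>
    if (eH s(x.2, y.2) : ℕ) = 0 then (ceG s(x.1, y.1) : ℕ)
    else m + 1 + ((eH s(x.2, y.2) : ℕ) - 1) * m + (ceD s((x.1, b x.2), (y.1, b y.2)) : ℕ)
    with hceValdef
  have hblock : ∀ (j t : ℕ), 1 ≤ j → j < d → t < m → m + 1 + (j - 1) * m + t < N := by
    intro j t hj1 hjd htm
    have h2 : j - 1 + 2 ≤ d := by omega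
    have h3 : (j - 1 + 2) * m ≤ d * m := Nat.mul_le_mul_right m h2
    have h4 : (j - 1 + 2) * m = (j - 1) * m + 2 * m := by ring
    have h5 : m * d = d * m := Nat.mul_comm m d
    omega
  have hceValLt : ∀ x y, ceVal x y < N := by
    intro x y
    rw [hceValdef]
    dsimp only
    split_ifs with h
    · have := (ceG s(x.1, y.1)).isLt
      omega
    · exact hblock _ _ (by omega) (eH s(x.2, y.2)).isLt (ceD s((x.1, b x.2), (y.1, b y.2))).isLt
  have hsymm : ∀ x y, ceVal x y = ceVal y x := by
    intro x y
    rw [hceValdef]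
    dsimp only
    rw [show s(y.2, x.2) = s(x.2, y.2) from Sym2.eq_swap,
      show s(y.1, x.1) = s(x.1, y.1) from Sym2.eq_swap,
      show s((y.1, b y.2), (x.1, b x.2)) = s((x.1, b x.2), (y.1, b y.2)) from Sym2.eq_swap]
  set ce : Sym2 (V × W) → Fin N := Sym2.lift ⟨fun x y => ⟨ceVal x y, hceValLt x y⟩,
    fun x y => by simp only [Fin.mk.injEq]; exact hsymm x y⟩ with hcedef
  have hcemk : ∀ x y, (ce s(x, y) : ℕ) = ceVal x y := by
    intro x y
    rw [hcedef, Sym2.lift_mk]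
  refine ⟨cv, ce, ?_, ?_, ?_⟩
  · intro u v huv heq
    have hval : (cv u : ℕ) = (cv v : ℕ) := congrArg Fin.val heq
    have hcvu : (cv u : ℕ) = (cvG u.1 : ℕ) := rfl
    have hcvv : (cv v : ℕ) = (cvG v.1 : ℕ) := rfl
    rw [hcvu, hcvv] at hval
    exact hG1 u.1 v.1 huv.1 (Fin.val_injective hval)
  · intro u v w huv huw hvw heq
    have hval : ceVal u v = ceVal u w := by
      rw [← hcemk u v, ← hcemk u w, heq]
    rw [hceValdef] at hval
    dsimp only at hval
    by_cases hj1 : (eH s(u.2, v.2) : ℕ) = 0 <;> by_cases hj2 : (eH s(u.2, w.2) : ℕ) = 0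
    · rw [if_pos hj1, if_pos hj2] at hval
      have hv2w2 : v.2 = w.2 := by
        by_contra hne
        exact heH u.2 v.2 w.2 huv.2 huw.2 hne (Fin.val_injective (hj1.trans hj2.symm))
      have hv1w1 : v.1 ≠ w.1 := fun h => hvw (Prod.ext h hv2w2)
      exact hG2 u.1 v.1 w.1 huv.1 huw.1 hv1w1 (Fin.val_injective hval)
    · rw [if_pos hj1, if_neg hj2] at hval
      have := (ceG s(u.1, v.1)).isLt
      omega
    · rw [if_neg hj1, if_pos hj2] at hval
      have := (ceG s(u.1, w.1)).isLt
      omega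
    · rw [if_neg hj1, if_neg hj2] at hval
      by_cases hjj : (eH s(u.2, v.2) : ℕ) = (eH s(u.2, w.2) : ℕ)
      · have hfj : eH s(u.2, v.2) = eH s(u.2, w.2) := Fin.val_injective hjj
        have hv2w2 : v.2 = w.2 := by
          by_contra hne
          exact heH u.2 v.2 w.2 huv.2 huw.2 hne hfj
        have hv1w1 : v.1 ≠ w.1 := fun h => hvw (Prod.ext h hv2w2)
        have hDadj1 : D.Adj (u.1, b u.2) (v.1, b v.2) :=
          ⟨huv.1, by simpa using hb u.2 v.2 huv.2⟩
        have hDadj2 : D.Adj (u.1, b u.2) (w.1, b w.2) :=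
          ⟨huw.1, by simpa using hb u.2 w.2 huw.2⟩
        have hDne : (v.1, b v.2) ≠ (w.1, b w.2) := by
          intro h
          apply hv1w1
          exact congrArg (Prod.fst : V × Fin 2 → V) h
        apply hceD (u.1, b u.2) (v.1, b v.2) (w.1, b w.2) hDadj1 hDadj2 hDne
        apply Fin.val_injective
        rw [hjj] at hval
        omega
      · -- different nonzero blocks
        have hkey : ∀ a c t1 t2 : ℕ, t1 < m → t2 < m → a < c →
            m + 1 + a * m + t1 ≠ m + 1 + c * m + t2 := by
          intro a c t1 t2 ht1 ht2 hac
          have h1 : (a + 1) * m ≤ c * m := Nat.mul_le_mul_right m (by omega)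
          have h2 : (a + 1) * m = a * m + m := by ring
          omega
        have ht1 := (ceD s((u.1, b u.2), (v.1, b v.2))).isLt
        have ht2 := (ceD s((u.1, b u.2), (w.1, b w.2))).isLt
        rcases Nat.lt_or_ge ((eH s(u.2, v.2) : ℕ) - 1) ((eH s(u.2, w.2) : ℕ) - 1) with hlt | hge
        · exact hkey _ _ _ _ ht1 ht2 hlt hval
        · have hlt2 : ((eH s(u.2, w.2) : ℕ) - 1) < ((eH s(u.2, v.2) : ℕ) - 1) := by omega
          exact hkey _ _ _ _ ht2 ht1 hlt2 hval.symm
  · intro u v huv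
    have hcvu : (cv u : ℕ) = (cvG u.1 : ℕ) := rfl
    have hcvv : (cv v : ℕ) = (cvG v.1 : ℕ) := rfl
    have hval : (ce s(u, v) : ℕ) = ceVal u v := hcemk u v
    rw [hceValdef] at hval
    dsimp only at hval
    by_cases hj : (eH s(u.2, v.2) : ℕ) = 0
    · rw [if_pos hj] at hval
      obtain ⟨ha, hb'⟩ := hG3 u.1 v.1 huv.1
      constructor
      · intro heq
        apply ha
        apply Fin.val_injective
        rw [← hval, heq, hcvu]
      · intro heq
        apply hb'
        apply Fin.val_injective
        rw [← hval, heq, hcvv]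
    · rw [if_neg hj] at hval
      have h1 := (cvG u.1).isLt
      have h2 := (cvG v.1).isLt
      constructor
      · intro heq
        have := congrArg Fin.val heq
        rw [hval, hcvu] at this
        omega
      · intro heq
        have := congrArg Fin.val heq
        rw [hval, hcvv] at this
        omega

end Main


theorem type1_tensor_bipartite {V W : Type*} [Fintype V] [Fintype W]
    [Nonempty V] [Nonempty W]
    (G : SimpleGraph V) (H : SimpleGraph W) [DecidableRel G.Adj] [DecidableRel H.Adj]
    (hG : totalChromaticNumber G = G.maxDegree + 1)
    (hH : H.Colorable 2) :
    totalChromaticNumber (tensorProd G H) = (tensorProd G H).maxDegree + 1 := by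
  classical
  have hmax : (tensorProd G H).maxDegree = G.maxDegree * H.maxDegree := tensor_maxDegree G H
  have hSGne : {k | HasTotalColoring G k}.Nonempty := by
    by_contra h
    rw [Set.not_nonempty_iff_eq_empty] at h
    have h0 : totalChromaticNumber G = 0 := by
      rw [totalChromaticNumber, h, Nat.sInf_empty]
    omega
  have hGcol : HasTotalColoring G (G.maxDegree + 1) := by
    have h2 : totalChromaticNumber G ∈ {k | HasTotalColoring G k} := Nat.sInf_mem hSGne
    rw [hG] at h2
    exact h2
  have hJcol : HasTotalColoring (tensorProd G H) ((tensorProd G H).maxDegree + 1) := by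
    rw [hmax]
    rcases Nat.eq_zero_or_pos G.maxDegree with hm | hm
    · have hz : G.maxDegree * H.maxDegree = 0 := by rw [hm]; ring
      rw [hz]
      apply hasTotalColoring_one
      intro x y hxy
      exact no_adj_of_maxDegree_zero G hm x.1 y.1 hxy.1
    · rcases Nat.eq_zero_or_pos H.maxDegree with hd | hd
      · have hz : G.maxDegree * H.maxDegree = 0 := by rw [hd]; ring
        rw [hz]
        apply hasTotalColoring_one
        intro x y hxy
        exact no_adj_of_maxDegree_zero H hd x.2 y.2 hxy.2
      · have bcol : H.Coloring (Fin 2) := hH.some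
        exact main_construction G H hGcol bcol (fun x y hxy => bcol.valid hxy) hm hd
  have hne : {k | HasTotalColoring (tensorProd G H) k}.Nonempty := ⟨_, hJcol⟩
  apply le_antisymm
  · exact Nat.sInf_le hJcol
  · have h2 : HasTotalColoring (tensorProd G H) (totalChromaticNumber (tensorProd G H)) :=
      Nat.sInf_mem hne
    exact totalColoring_lower_bound (tensorProd G H) h2
end

section
/- For every integer n ≥ 3, the direct product of cycle graphs C_6 × C_n has total chromatic number 5. -/
open SimpleGraph

namespace C6Aux

def vcol : Fin 6 → Fin 5 := fun i => ⟨i.val % 3, by omega⟩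
def gp : Fin 6 → Fin 5 := fun i => ⟨(i.val + 5) % 6 % 3, by omega⟩
def gm : Fin 6 → Fin 5 := fun i => ⟨3 + i.val % 2, by omega⟩

lemma six_excl : ∀ a b : Fin 6, a - b = 1 → b - a = 1 → False := by decide

lemma n_excl {m : ℕ} (a b : Fin (m + 3)) (h1 : a - b = 1) (h2 : b - a = 1) : False := by
  have h0 : a - b + (b - a) = 0 := by rw [sub_add_sub_cancel, sub_self]
  rw [h1, h2] at h0
  have h' := congrArg Fin.val h0
  rw [Fin.val_add, Fin.val_one, Fin.val_zero, Nat.mod_eq_of_lt (by omega)] at h'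
  omega

lemma one_ne_neg_one {m : ℕ} : (1 : Fin (m + 3)) ≠ -1 := by
  intro h
  have h2 : (1 : Fin (m + 3)) + 1 = 0 :=
    (congrArg (· + 1) h).trans (neg_add_cancel 1)
  have h' := congrArg Fin.val h2
  rw [Fin.val_add, Fin.val_one, Fin.val_zero, Nat.mod_eq_of_lt (by omega)] at h'
  omega

def f {m : ℕ} (x y : Fin 6 × Fin (m + 3)) : Fin 5 :=
  if y.1 - x.1 = 1 then (if y.2 - x.2 = 1 then gp x.1 else gm x.1)
  else if x.1 - y.1 = 1 then (if x.2 - y.2 = 1 then gp y.1 else gm y.1)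
  else 0

lemma fsymm {m : ℕ} (x y : Fin 6 × Fin (m + 3)) : f x y = f y x := by
  unfold f
  by_cases h1 : y.1 - x.1 = 1 <;> by_cases h2 : x.1 - y.1 = 1
  · exact (six_excl _ _ h2 h1).elim
  · simp [h1, h2]
  · simp [h1, h2]
  · simp [h1, h2]

lemma f_pp {m : ℕ} (x y : Fin 6 × Fin (m + 3)) (h1 : y.1 - x.1 = 1) (h2 : y.2 - x.2 = 1) :
    f x y = gp x.1 := by simp [f, h1, h2]

lemma f_pm {m : ℕ} (x y : Fin 6 × Fin (m + 3)) (h1 : y.1 - x.1 = 1) (h2 : x.2 - y.2 = 1) :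
    f x y = gm x.1 := by
  have hn : ¬ (y.2 - x.2 = 1) := fun h => n_excl _ _ h h2
  simp [f, h1, hn]

lemma f_mp {m : ℕ} (x y : Fin 6 × Fin (m + 3)) (h1 : x.1 - y.1 = 1) (h2 : y.2 - x.2 = 1) :
    f x y = gm y.1 := by
  have hn : ¬ (y.1 - x.1 = 1) := fun h => six_excl _ _ h h1
  have hn2 : ¬ (x.2 - y.2 = 1) := fun h => n_excl _ _ h h2
  simp [f, h1, hn, hn2]

lemma f_mm {m : ℕ} (x y : Fin 6 × Fin (m + 3)) (h1 : x.1 - y.1 = 1) (h2 : x.2 - y.2 = 1) :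
    f x y = gp y.1 := by
  have hn : ¬ (y.1 - x.1 = 1) := fun h => six_excl _ _ h h1
  simp [f, h1, hn, h2]

lemma Lpm : ∀ a : Fin 6, gp a ≠ gm a := by decide

lemma Lc : ∀ a e : Fin 6, a - e = 1 →
    gp a ≠ gm e ∧ gp a ≠ gp e ∧ gm a ≠ gm e ∧ gm a ≠ gp e := by decide

lemma Lev1 : ∀ a c : Fin 6, c - a = 1 →
    (gp a ≠ vcol a ∧ gp a ≠ vcol c) ∧ (gm a ≠ vcol a ∧ gm a ≠ vcol c) := by decide

lemma Lev2 : ∀ a c : Fin 6, a - c = 1 →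
    (gp c ≠ vcol a ∧ gp c ≠ vcol c) ∧ (gm c ≠ vcol a ∧ gm c ≠ vcol c) := by decide

lemma Lv : ∀ a c : Fin 6, (a - c = 1 ∨ c - a = 1) → vcol a ≠ vcol c := by decide

lemma sub_cancel {G : Type*} [AddGroup G] {a c e x : G} (h1 : c - a = x) (h2 : e - a = x) :
    c = e := by
  rw [sub_eq_iff_eq_add] at h1 h2
  rw [h1, h2]

lemma sub_cancel' {G : Type*} [AddGroup G] {a c e x : G} (h1 : a - c = x) (h2 : a - e = x) :
    c = e := by
  rw [sub_eq_iff_eq_add] at h1 h2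
  rw [h1] at h2
  exact add_left_cancel h2

lemma upper (m : ℕ) :
    HasTotalColoring (tensorProd (cycleGraph 6) (cycleGraph (m + 3))) 5 := by
  refine ⟨fun x => vcol x.1, Sym2.lift ⟨f, fsymm⟩, ?_, ?_, ?_⟩
  · rintro ⟨a, b⟩ ⟨c, d⟩ h
    exact Lv a c (cycleGraph_adj.mp h.1)
  · rintro ⟨a, b⟩ ⟨c, d⟩ ⟨e, g⟩ hv hw hne
    simp only [Sym2.lift_mk]
    have hv1 := cycleGraph_adj.mp hv.1
    have hv2 := cycleGraph_adj.mp hv.2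
    have hw1 := cycleGraph_adj.mp hw.1
    have hw2 := cycleGraph_adj.mp hw.2
    rcases hv1 with hv1 | hv1 <;> rcases hv2 with hv2 | hv2 <;>
      rcases hw1 with hw1 | hw1 <;> rcases hw2 with hw2 | hw2
    -- v: (M,M)
    · exact absurd (Prod.ext (sub_cancel' hv1 hw1) (sub_cancel' hv2 hw2)) hne
    · rw [f_mm _ _ hv1 hv2, f_mp _ _ hw1 hw2]
      obtain rfl : c = e := sub_cancel' hv1 hw1
      exact Lpm _
    · rw [f_mm _ _ hv1 hv2, f_pm _ _ hw1 hw2]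
      exact (Lc a c hv1).2.2.2.symm
    · rw [f_mm _ _ hv1 hv2, f_pp _ _ hw1 hw2]
      exact (Lc a c hv1).2.1.symm
    -- v: (M,P)
    · rw [f_mp _ _ hv1 hv2, f_mm _ _ hw1 hw2]
      obtain rfl : c = e := sub_cancel' hv1 hw1
      exact (Lpm _).symm
    · exact absurd (Prod.ext (sub_cancel' hv1 hw1) (sub_cancel hv2 hw2)) hne
    · rw [f_mp _ _ hv1 hv2, f_pm _ _ hw1 hw2]
      exact (Lc a c hv1).2.2.1.symm
    · rw [f_mp _ _ hv1 hv2, f_pp _ _ hw1 hw2]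
      exact (Lc a c hv1).1.symm
    -- v: (P,M)
    · rw [f_pm _ _ hv1 hv2, f_mm _ _ hw1 hw2]
      exact (Lc a e hw1).2.2.2
    · rw [f_pm _ _ hv1 hv2, f_mp _ _ hw1 hw2]
      exact (Lc a e hw1).2.2.1
    · exact absurd (Prod.ext (sub_cancel hv1 hw1) (sub_cancel' hv2 hw2)) hne
    · rw [f_pm _ _ hv1 hv2, f_pp _ _ hw1 hw2]
      exact (Lpm a).symm
    -- v: (P,P)
    · rw [f_pp _ _ hv1 hv2, f_mm _ _ hw1 hw2]
      exact (Lc a e hw1).2.1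
    · rw [f_pp _ _ hv1 hv2, f_mp _ _ hw1 hw2]
      exact (Lc a e hw1).1
    · rw [f_pp _ _ hv1 hv2, f_pm _ _ hw1 hw2]
      exact Lpm a
    · exact absurd (Prod.ext (sub_cancel hv1 hw1) (sub_cancel hv2 hw2)) hne
  · rintro ⟨a, b⟩ ⟨c, d⟩ h
    simp only [Sym2.lift_mk]
    have h1 := cycleGraph_adj.mp h.1
    have h2 := cycleGraph_adj.mp h.2
    rcases h1 with h1 | h1 <;> rcases h2 with h2 | h2
    · rw [f_mm _ _ h1 h2]
      exact ⟨(Lev2 a c h1).1.1, (Lev2 a c h1).1.2⟩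
    · rw [f_mp _ _ h1 h2]
      exact ⟨(Lev2 a c h1).2.1, (Lev2 a c h1).2.2⟩
    · rw [f_pm _ _ h1 h2]
      exact ⟨(Lev1 a c h1).2.1, (Lev1 a c h1).2.2⟩
    · rw [f_pp _ _ h1 h2]
      exact ⟨(Lev1 a c h1).1.1, (Lev1 a c h1).1.2⟩

lemma lower (m k : ℕ)
    (h : HasTotalColoring (tensorProd (cycleGraph 6) (cycleGraph (m + 3))) k) : 5 ≤ k := by
  obtain ⟨cv, ce, _hvv, hee, hev⟩ := h
  set u : Fin 6 × Fin (m + 3) := (0, 0) with hu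
  have a61 : (cycleGraph 6).Adj 0 1 := by decide
  have a65 : (cycleGraph 6).Adj 0 5 := by decide
  have an1 : (cycleGraph (m + 3)).Adj 0 1 := cycleGraph_adj.mpr (Or.inr (by simp))
  have an2 : (cycleGraph (m + 3)).Adj 0 (-1) := cycleGraph_adj.mpr (Or.inl (by simp))
  have adj1 : (tensorProd (cycleGraph 6) (cycleGraph (m + 3))).Adj u (1, 1) := ⟨a61, an1⟩
  have adj2 : (tensorProd (cycleGraph 6) (cycleGraph (m + 3))).Adj u (1, -1) := ⟨a61, an2⟩
  have adj3 : (tensorProd (cycleGraph 6) (cycleGraph (m + 3))).Adj u (5, 1) := ⟨a65, an1⟩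
  have adj4 : (tensorProd (cycleGraph 6) (cycleGraph (m + 3))).Adj u (5, -1) := ⟨a65, an2⟩
  have h15 : (1 : Fin 6) ≠ 5 := by decide
  have hne12 : ((1, 1) : Fin 6 × Fin (m + 3)) ≠ (1, -1) := by
    simp [Prod.ext_iff, one_ne_neg_one]
  have hne34 : ((5, 1) : Fin 6 × Fin (m + 3)) ≠ (5, -1) := by
    simp [Prod.ext_iff, one_ne_neg_one]
  have hne13 : ((1, 1) : Fin 6 × Fin (m + 3)) ≠ (5, 1) := by
    simp [Prod.ext_iff, h15]
  have hne14 : ((1, 1) : Fin 6 × Fin (m + 3)) ≠ (5, -1) := by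
    simp [Prod.ext_iff, h15]
  have hne23 : ((1, -1) : Fin 6 × Fin (m + 3)) ≠ (5, 1) := by
    simp [Prod.ext_iff, h15]
  have hne24 : ((1, -1) : Fin 6 × Fin (m + 3)) ≠ (5, -1) := by
    simp [Prod.ext_iff, h15]
  have hnd : ([cv u, ce s(u, (1,1)), ce s(u, (1,-1)), ce s(u, (5,1)), ce s(u, (5,-1))] :
      List (Fin k)).Nodup := by
    refine List.nodup_cons.mpr ⟨?_, List.nodup_cons.mpr ⟨?_, List.nodup_cons.mpr ⟨?_,
      List.nodup_cons.mpr ⟨?_, List.nodup_singleton _⟩⟩⟩⟩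
    · intro hmem
      simp only [List.mem_cons, List.not_mem_nil, or_false, List.mem_singleton] at hmem
      rcases hmem with h | h | h | h
      · exact (hev u _ adj1).1 h.symm
      · exact (hev u _ adj2).1 h.symm
      · exact (hev u _ adj3).1 h.symm
      · exact (hev u _ adj4).1 h.symm
    · intro hmem
      simp only [List.mem_cons, List.not_mem_nil, or_false, List.mem_singleton] at hmem
      rcases hmem with h | h | h
      · exact hee u _ _ adj1 adj2 hne12 h
      · exact hee u _ _ adj1 adj3 hne13 h
      · exact hee u _ _ adj1 adj4 hne14 h
    · intro hmem
      simp only [List.mem_cons, List.not_mem_nil, or_false, List.mem_singleton] at hmem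
      rcases hmem with h | h
      · exact hee u _ _ adj2 adj3 hne23 h
      · exact hee u _ _ adj2 adj4 hne24 h
    · intro hmem
      simp only [List.mem_singleton] at hmem
      exact hee u _ _ adj3 adj4 hne34 hmem
  have := hnd.length_le_card
  simpa using this

end C6Aux

theorem c6_tensor_cn (n : ℕ) (hn : 3 ≤ n) :
    totalChromaticNumber (tensorProd (cycleGraph 6) (cycleGraph n)) = 5 := by
  obtain ⟨m, rfl⟩ : ∃ m, n = m + 3 := ⟨n - 3, by omega⟩
  refine le_antisymm (Nat.sInf_le (C6Aux.upper m)) ?_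
  exact le_csInf ⟨5, C6Aux.upper m⟩ fun k hk => C6Aux.lower m k hk
end

section
/- For every integer n ≥ 3, the direct product of cycle graphs C_8 × C_n has total chromatic number 5. -/
open SimpleGraph

def Vc : Fin 8 → Fin 5 := ![0,1,2,0,3,2,1,3]
def Ac : Fin 8 → Fin 5 := ![2,0,1,2,0,3,0,4]
def Bc : Fin 8 → Fin 5 := ![1,3,4,3,4,1,4,2]

lemma c8_adj : ∀ u v : Fin 8, (cycleGraph 8).Adj u v ↔ (v = u + 1 ∨ u = v + 1) := by decide

lemma finTwoNeZero (m : ℕ) : (2 : Fin (m+3)) ≠ 0 := by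
  intro h
  have h2 : (2 : Fin (m+3)).val = (0 : Fin (m+3)).val := congrArg Fin.val h
  rw [Fin.val_zero] at h2
  have h3 : (2 : Fin (m+3)).val = 2 % (m+3) := rfl
  rw [Nat.mod_eq_of_lt (by omega)] at h3
  omega

open Fin.CommRing in
lemma cn_adj (m : ℕ) (u v : Fin (m+3)) :
    (cycleGraph (m+3)).Adj u v ↔ (v = u + 1 ∨ u = v + 1) := by
  rw [cycleGraph_adj (n := m+1)]
  constructor
  · rintro (h | h)
    · right; rw [sub_eq_iff_eq_add] at h; rw [h]; ring
    · left; rw [sub_eq_iff_eq_add] at h; rw [h]; ring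
  · rintro (h | h)
    · right; rw [h]; ring
    · left; rw [h]; ring

open Fin.CommRing in
lemma jadd_ne_jsub (m : ℕ) (j : Fin (m+3)) : j - 1 ≠ j + 1 := by
  intro h
  exact finTwoNeZero m (by linear_combination -h)

def fe (m : ℕ) (x y : Fin 8 × Fin (m+3)) : Fin 5 :=
  if y.2 = x.2 + 1 then (if y.1 = x.1 + 1 then Ac x.1 else Bc x.1)
  else if x.2 = y.2 + 1 then (if x.1 = y.1 + 1 then Ac y.1 else Bc y.1)
  else 0

open Fin.CommRing in
lemma fe_symm (m : ℕ) (x y : Fin 8 × Fin (m+3)) : fe m x y = fe m y x := by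
  unfold fe
  by_cases h1 : y.2 = x.2 + 1
  · by_cases h2 : x.2 = y.2 + 1
    · exact absurd (show (2 : Fin (m+3)) = 0 by linear_combination -h1 - h2) (finTwoNeZero m)
    · rw [if_pos h1, if_neg h2, if_pos h1]
  · by_cases h2 : x.2 = y.2 + 1
    · rw [if_neg h1, if_pos h2, if_pos h2]
    · rw [if_neg h1, if_neg h2, if_neg h2, if_neg h1]

lemma ce_pp (m : ℕ) (i : Fin 8) (j : Fin (m+3)) :
    Sym2.lift ⟨fe m, fe_symm m⟩ s((i,j),(i+1,j+1)) = Ac i := by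
  rw [Sym2.lift_mk]; unfold fe; simp

lemma ce_mp (m : ℕ) (i : Fin 8) (j : Fin (m+3)) :
    Sym2.lift ⟨fe m, fe_symm m⟩ s((i,j),(i-1,j+1)) = Bc i := by
  rw [Sym2.lift_mk]
  simp [fe, show ¬(i - 1 = i + 1) by revert i; decide]

lemma ce_pm (m : ℕ) (i : Fin 8) (j : Fin (m+3)) :
    Sym2.lift ⟨fe m, fe_symm m⟩ s((i,j),(i+1,j-1)) = Bc (i+1) := by
  rw [Sym2.lift_mk]
  simp [fe, jadd_ne_jsub m j, show ¬(i = i + 1 + 1) by revert i; decide]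

lemma ce_mm (m : ℕ) (i : Fin 8) (j : Fin (m+3)) :
    Sym2.lift ⟨fe m, fe_symm m⟩ s((i,j),(i-1,j-1)) = Ac (i-1) := by
  rw [Sym2.lift_mk]
  simp [fe, jadd_ne_jsub m j]

lemma adj_cases (m : ℕ) (i : Fin 8) (j : Fin (m+3)) (y : Fin 8 × Fin (m+3))
    (h : (tensorProd (cycleGraph 8) (cycleGraph (m+3))).Adj (i,j) y) :
    y = (i+1, j+1) ∨ y = (i-1, j+1) ∨ y = (i+1, j-1) ∨ y = (i-1, j-1) := by
  obtain ⟨i', j'⟩ := y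
  obtain ⟨hi, hj⟩ := h
  rw [c8_adj] at hi
  rw [cn_adj] at hj
  rcases hi with hi | hi <;> rcases hj with hj | hj
  · exact Or.inl (Prod.ext hi hj)
  · exact Or.inr (Or.inr (Or.inl (Prod.ext hi (eq_sub_of_add_eq hj.symm))))
  · exact Or.inr (Or.inl (Prod.ext (eq_sub_of_add_eq hi.symm) hj))
  · exact Or.inr (Or.inr (Or.inr (Prod.ext (eq_sub_of_add_eq hi.symm) (eq_sub_of_add_eq hj.symm))))

theorem c8_tensor_cn (n : ℕ) (hn : 3 ≤ n) :
    totalChromaticNumber (tensorProd (cycleGraph 8) (cycleGraph n)) = 5 := by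
  obtain ⟨m, rfl⟩ : ∃ m, n = m + 3 := ⟨n - 3, by omega⟩
  have hVV : ∀ p : Fin 8, Vc p ≠ Vc (p+1) := by decide
  have hVVm : ∀ p : Fin 8, Vc p ≠ Vc (p-1) := by decide
  have hAB : ∀ p : Fin 8, Ac p ≠ Bc p := by decide
  have hABp : ∀ p : Fin 8, Ac p ≠ Bc (p+1) := by decide
  have hAAm : ∀ p : Fin 8, Ac p ≠ Ac (p-1) := by decide
  have hBBp : ∀ p : Fin 8, Bc p ≠ Bc (p+1) := by decide
  have hBAm : ∀ p : Fin 8, Bc p ≠ Ac (p-1) := by decide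
  have hBpAm : ∀ p : Fin 8, Bc (p+1) ≠ Ac (p-1) := by decide
  have hAV : ∀ p : Fin 8, Ac p ≠ Vc p := by decide
  have hAVp : ∀ p : Fin 8, Ac p ≠ Vc (p+1) := by decide
  have hBV : ∀ p : Fin 8, Bc p ≠ Vc p := by decide
  have hBVm : ∀ p : Fin 8, Bc p ≠ Vc (p-1) := by decide
  have hBpV : ∀ p : Fin 8, Bc (p+1) ≠ Vc p := by decide
  have hAmV : ∀ p : Fin 8, Ac (p-1) ≠ Vc p := by decide
  have hmem : HasTotalColoring (tensorProd (cycleGraph 8) (cycleGraph (m+3))) 5 := by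
    refine ⟨fun x => Vc x.1, Sym2.lift ⟨fe m, fe_symm m⟩, ?_, ?_, ?_⟩
    · rintro ⟨i, j⟩ v h
      rcases adj_cases m i j v h with rfl | rfl | rfl | rfl
      · exact hVV i
      · exact hVVm i
      · exact hVV i
      · exact hVVm i
    · rintro ⟨i, j⟩ v w hv hw hvw
      rcases adj_cases m i j v hv with rfl | rfl | rfl | rfl <;>
        rcases adj_cases m i j w hw with rfl | rfl | rfl | rfl <;>
        simp only [ce_pp, ce_mp, ce_pm, ce_mm] <;>
        first
          | exact absurd rfl hvw
          | exact hAB i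
          | exact (hAB i).symm
          | exact hABp i
          | exact (hABp i).symm
          | exact hAAm i
          | exact (hAAm i).symm
          | exact hBBp i
          | exact (hBBp i).symm
          | exact hBAm i
          | exact (hBAm i).symm
          | exact hBpAm i
          | exact (hBpAm i).symm
    · rintro ⟨i, j⟩ v h
      rcases adj_cases m i j v h with rfl | rfl | rfl | rfl <;>
        simp only [ce_pp, ce_mp, ce_pm, ce_mm]
      · exact ⟨hAV i, hAVp i⟩
      · exact ⟨hBV i, hBVm i⟩
      · exact ⟨hBpV i, hBV (i+1)⟩
      · exact ⟨hAmV i, hAV (i-1)⟩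
  apply le_antisymm
  · exact Nat.sInf_le hmem
  · refine le_csInf ⟨5, hmem⟩ ?_
    rintro k ⟨cv, ce, h1, h2, h3⟩
    set jl : Fin (m+3) := ⟨m+2, by omega⟩ with hjl
    have hjl1 : jl + 1 = 0 := by
      apply Fin.ext
      simp [Fin.add_def, hjl]
    have hjlne : (1 : Fin (m+3)) ≠ jl := by
      intro h
      have hv := congrArg Fin.val h
      have h1v : (1 : Fin (m+3)).val = 1 % (m+3) := rfl
      rw [Nat.mod_eq_of_lt (by omega)] at h1v
      simp [hjl, h1v] at hv
    have hadj01 : (cycleGraph (m+3)).Adj 0 1 := (cn_adj m 0 1).mpr (Or.inl (zero_add 1).symm)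
    have hadj0l : (cycleGraph (m+3)).Adj 0 jl := (cn_adj m 0 jl).mpr (Or.inr hjl1.symm)
    have hA : ∀ i' : Fin 8, (cycleGraph 8).Adj 0 i' ↔ (i' = 1 ∨ i' = 7) := by decide
    set u : Fin 8 × Fin (m+3) := (0, 0) with hu
    have adj1 : (tensorProd (cycleGraph 8) (cycleGraph (m+3))).Adj u (1, 1) :=
      ⟨(hA 1).mpr (Or.inl rfl), hadj01⟩
    have adj2 : (tensorProd (cycleGraph 8) (cycleGraph (m+3))).Adj u (7, 1) :=
      ⟨(hA 7).mpr (Or.inr rfl), hadj01⟩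
    have adj3 : (tensorProd (cycleGraph 8) (cycleGraph (m+3))).Adj u (1, jl) :=
      ⟨(hA 1).mpr (Or.inl rfl), hadj0l⟩
    have adj4 : (tensorProd (cycleGraph 8) (cycleGraph (m+3))).Adj u (7, jl) :=
      ⟨(hA 7).mpr (Or.inr rfl), hadj0l⟩
    have ne17 : ((1 : Fin 8), (1 : Fin (m+3))) ≠ (7, 1) := by
      intro h; rw [Prod.mk.injEq] at h; exact absurd h.1 (by decide)
    have ne1l : ∀ a b : Fin 8, (a, (1 : Fin (m+3))) ≠ (b, jl) := by
      intro a b h; rw [Prod.mk.injEq] at h; exact hjlne h.2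
    have ne7l : ((1 : Fin 8), jl) ≠ (7, jl) := by
      intro h; rw [Prod.mk.injEq] at h; exact absurd h.1 (by decide)
    have e12 : ce s(u, (1,1)) ≠ ce s(u, (7,1)) := h2 u _ _ adj1 adj2 ne17
    have e13 : ce s(u, (1,1)) ≠ ce s(u, (1,jl)) := h2 u _ _ adj1 adj3 (ne1l 1 1)
    have e14 : ce s(u, (1,1)) ≠ ce s(u, (7,jl)) := h2 u _ _ adj1 adj4 (ne1l 1 7)
    have e23 : ce s(u, (7,1)) ≠ ce s(u, (1,jl)) := h2 u _ _ adj2 adj3 (ne1l 7 1)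
    have e24 : ce s(u, (7,1)) ≠ ce s(u, (7,jl)) := h2 u _ _ adj2 adj4 (ne1l 7 7)
    have e34 : ce s(u, (1,jl)) ≠ ce s(u, (7,jl)) := h2 u _ _ adj3 adj4 ne7l
    have v1 : ce s(u, (1,1)) ≠ cv u := (h3 u _ adj1).1
    have v2 : ce s(u, (7,1)) ≠ cv u := (h3 u _ adj2).1
    have v3 : ce s(u, (1,jl)) ≠ cv u := (h3 u _ adj3).1
    have v4 : ce s(u, (7,jl)) ≠ cv u := (h3 u _ adj4).1
    have hnodup : ([cv u, ce s(u, (1,1)), ce s(u, (7,1)), ce s(u, (1,jl)), ce s(u, (7,jl))] :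
        List (Fin k)).Nodup := by
      simp only [List.nodup_cons, List.mem_cons, List.mem_singleton, List.not_mem_nil,
        List.nodup_nil, not_or]
      exact ⟨⟨v1.symm, v2.symm, v3.symm, v4.symm, not_false⟩,
        ⟨e12, e13, e14, not_false⟩, ⟨e23, e24, not_false⟩, ⟨e34, not_false⟩,
        not_false, trivial⟩
    have hlen := hnodup.length_le_card
    simpa using hlen
end

section
/- For every integer n ≥ 3, the direct product of cycle graphs C_9 × C_n has total chromatic number 5. -/
open SimpleGraph

namespace C9Cn

def CVt : Fin 9 → Fin 5 → Fin 5 :=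
 ![![0,0,0,0,0], ![4,4,4,4,4], ![3,3,1,3,3], ![0,0,1,0,2], ![4,4,4,4,4], ![3,2,1,3,3], ![0,0,1,2,0], ![4,4,4,4,4], ![3,3,1,3,3]]
def EPt : Fin 9 → Fin 5 → Fin 5 :=
 ![![2,1,1,1,2], ![0,0,0,0,0], ![4,4,4,4,4], ![2,1,3,3,0], ![1,3,2,2,2], ![4,4,4,4,4], ![1,3,3,3,3], ![2,3,1,1,2], ![4,4,4,4,4]]
def EMt : Fin 9 → Fin 5 → Fin 5 :=
 ![![3,3,3,3,3], ![2,1,2,1,2], ![2,1,3,1,2], ![3,2,0,1,3], ![0,1,0,1,0], ![0,3,2,1,0], ![2,1,2,1,2], ![0,0,0,0,0], ![2,1,2,1,2]]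

def Tr (a b : Fin 5) : Prop :=
  (a,b) ∈ ([(0,1),(1,2),(2,0),(2,4),(4,3),(3,4),(3,0)] : List (Fin 5 × Fin 5))

instance (a b : Fin 5) : Decidable (Tr a b) := by unfold Tr; infer_instance

set_option maxRecDepth 10000 in
lemma Lpair : ∀ (i : Fin 9) (a b : Fin 5), Tr a b →
    CVt i a ≠ CVt (i+1) b ∧ CVt i b ≠ CVt (i+1) a ∧
    EPt i a ≠ CVt i a ∧ EPt i a ≠ CVt (i+1) b ∧
    EMt i b ≠ CVt i b ∧ EMt i b ≠ CVt (i+1) a := by decide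

set_option maxRecDepth 10000 in
lemma Ltriple : ∀ (i : Fin 9) (p c q : Fin 5), Tr p c → Tr c q →
    (EPt i c ≠ EMt i c) ∧ (EPt i c ≠ EPt (i-1) p) ∧ (EPt i c ≠ EMt (i-1) q) ∧
    (EMt i c ≠ EPt (i-1) p) ∧ (EMt i c ≠ EMt (i-1) q) ∧ (EPt (i-1) p ≠ EMt (i-1) q) := by decide

def lab (n j : ℕ) : Fin 5 :=
  if n % 2 = 0 then (if j % 2 = 0 then 3 else 4)
  else if j = 0 then 0 else if j = 1 then 1 else if j = 2 then 2
  else if j % 2 = 1 then 4 else 3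

lemma labStep (n j : ℕ) (hn : 3 ≤ n) (hj : j < n) : Tr (lab n j) (lab n ((j+1) % n)) := by
  rcases eq_or_lt_of_le (Nat.succ_le_of_lt hj) with h | h
  · have h' : j + 1 = n := h
    rw [h', Nat.mod_self]
    unfold lab
    split_ifs <;> first | decide | omega | (exfalso; assumption)
  · rw [Nat.mod_eq_of_lt h]
    unfold lab
    split_ifs <;> first | decide | omega | (exfalso; assumption)

lemma convAdj {α : Type*} [AddCommGroup α] [One α] (a b : α) :
    (a - b = 1 ∨ b - a = 1) ↔ (b = a + 1 ∨ a = b + 1) := by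
  rw [sub_eq_iff_eq_add', sub_eq_iff_eq_add', or_comm]

section Construction
variable (m : ℕ)

lemma two_ne : (1 + 1 : Fin (m+3)) ≠ 0 := by
  intro h
  rw [Fin.ext_iff, Fin.val_add, Fin.val_one, Fin.val_zero,
    Nat.mod_eq_of_lt (by omega)] at h
  omega

lemma add11 (x : Fin (m+3)) : x + 1 + 1 ≠ x := by
  intro h
  have h' : x + (1+1) = x + 0 := by rw [← add_assoc, h, add_zero]
  exact two_ne m (add_left_cancel h')

lemma fin9_add2 : ∀ x : Fin 9, x + 1 + 1 ≠ x := by decide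

lemma adj_iff {u v : Fin 9 × Fin (m+3)} :
    (tensorProd (cycleGraph 9) (cycleGraph (m+3))).Adj u v ↔
      ((v.1 = u.1 + 1 ∨ u.1 = v.1 + 1) ∧ (v.2 = u.2 + 1 ∨ u.2 = v.2 + 1)) := by
  have e9 : (cycleGraph 9).Adj u.1 v.1 ↔ (u.1 - v.1 = 1 ∨ v.1 - u.1 = 1) := cycleGraph_adj
  have en : (cycleGraph (m+3)).Adj u.2 v.2 ↔ (u.2 - v.2 = 1 ∨ v.2 - u.2 = 1) := cycleGraph_adj
  change ((cycleGraph 9).Adj u.1 v.1 ∧ (cycleGraph (m+3)).Adj u.2 v.2) ↔ _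
  rw [e9, en, convAdj, convAdj]

def labF (b : Fin (m+3)) : Fin 5 := lab (m+3) b.val

lemma succTr (b : Fin (m+3)) : Tr (labF m b) (labF m (b+1)) := by
  have h := labStep (m+3) b.val (by omega) b.isLt
  have hv : ((b+1 : Fin (m+3))).val = (b.val + 1) % (m+3) := by
    rw [Fin.val_add, Fin.val_one]
  unfold labF
  rw [hv]
  exact h

lemma predTr (b : Fin (m+3)) : Tr (labF m (b-1)) (labF m b) := by
  have h := succTr m (b-1)
  rwa [sub_add_cancel] at h

def cvF : Fin 9 × Fin (m+3) → Fin 5 := fun u => CVt u.1 (labF m u.2)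

def FF : (Fin 9 × Fin (m+3)) → (Fin 9 × Fin (m+3)) → Fin 5 := fun u v =>
  if u.1 + 1 = v.1 then
    (if u.2 + 1 = v.2 then EPt u.1 (labF m u.2) else EMt u.1 (labF m u.2))
  else if v.1 + 1 = u.1 then
    (if v.2 + 1 = u.2 then EPt v.1 (labF m v.2) else EMt v.1 (labF m v.2))
  else 0

lemma FF_symm : ∀ u v, FF m u v = FF m v u := by
  intro u v
  unfold FF
  by_cases h1 : u.1 + 1 = v.1
  · have h2 : ¬(v.1 + 1 = u.1) := by
      intro h2
      exact fin9_add2 u.1 (by rw [h1, h2])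
    rw [if_pos h1, if_neg h2, if_pos h1]
  · by_cases h2 : v.1 + 1 = u.1
    · rw [if_neg h1, if_pos h2, if_pos h2]
    · rw [if_neg h1, if_neg h2, if_neg h2, if_neg h1]

def ceF : Sym2 (Fin 9 × Fin (m+3)) → Fin 5 := Sym2.lift ⟨FF m, FF_symm m⟩

lemma ce_mk (u v : Fin 9 × Fin (m+3)) : ceF m s(u, v) = FF m u v := Sym2.lift_mk _ _ _

lemma FF_up_pp (a : Fin 9) (b d : Fin (m+3)) (h : d = b + 1) :
    FF m (a, b) (a+1, d) = EPt a (labF m b) := by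
  unfold FF
  rw [if_pos rfl, if_pos h.symm]

lemma FF_up_pm (a : Fin 9) (b d : Fin (m+3)) (h : b = d + 1) :
    FF m (a, b) (a+1, d) = EMt a (labF m b) := by
  unfold FF
  rw [if_pos rfl, if_neg]
  intro hc
  exact add11 m d (by rw [← h, hc])

lemma FF_down_pp (c : Fin 9) (b d : Fin (m+3)) (h : b = d + 1) :
    FF m (c+1, b) (c, d) = EPt c (labF m d) := by
  unfold FF
  rw [if_neg (fin9_add2 c), if_pos rfl, if_pos h.symm]

lemma FF_down_pm (c : Fin 9) (b d : Fin (m+3)) (h : d = b + 1) :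
    FF m (c+1, b) (c, d) = EMt c (labF m d) := by
  unfold FF
  rw [if_neg (fin9_add2 c), if_pos rfl, if_neg]
  intro hc
  exact add11 m b (by rw [← h, hc])

lemma edge_classify (u v : Fin 9 × Fin (m+3))
    (h : (tensorProd (cycleGraph 9) (cycleGraph (m+3))).Adj u v) :
    (v = (u.1+1, u.2+1) ∧ ceF m s(u,v) = EPt u.1 (labF m u.2)) ∨
    (v = (u.1+1, u.2-1) ∧ ceF m s(u,v) = EMt u.1 (labF m u.2)) ∨
    (v = (u.1-1, u.2-1) ∧ ceF m s(u,v) = EPt (u.1-1) (labF m (u.2-1))) ∨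
    (v = (u.1-1, u.2+1) ∧ ceF m s(u,v) = EMt (u.1-1) (labF m (u.2+1))) := by
  obtain ⟨a, b⟩ := u
  obtain ⟨c, d⟩ := v
  rw [adj_iff] at h
  obtain ⟨h9, hn⟩ := h
  dsimp only at h9 hn ⊢
  rw [ce_mk]
  rcases h9 with h9 | h9 <;> rcases hn with hn | hn
  · left
    subst h9; subst hn
    exact ⟨rfl, FF_up_pp m a b _ rfl⟩
  · right; left
    subst h9; subst hn
    rw [add_sub_cancel_right]
    exact ⟨rfl, FF_up_pm m a (d+1) d rfl⟩
  · right; right; right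
    subst h9; subst hn
    rw [add_sub_cancel_right]
    exact ⟨rfl, FF_down_pm m c b (b+1) rfl⟩
  · right; right; left
    subst h9; subst hn
    rw [add_sub_cancel_right, add_sub_cancel_right]
    exact ⟨rfl, FF_down_pp m c (d+1) d rfl⟩

lemma upper : HasTotalColoring (tensorProd (cycleGraph 9) (cycleGraph (m+3))) 5 := by
  refine ⟨cvF m, ceF m, ?_, ?_, ?_⟩
  · -- vertex condition
    rintro ⟨a, b⟩ ⟨c, d⟩ hadj
    rw [adj_iff] at hadj
    obtain ⟨h9, hn⟩ := hadj
    dsimp only at h9 hn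
    unfold cvF
    dsimp only
    rcases h9 with h9 | h9 <;> rcases hn with hn | hn <;> subst h9 <;> subst hn
    · exact (Lpair a _ _ (succTr m b)).1
    · exact (Lpair a _ _ (succTr m d)).2.1
    · exact ((Lpair c _ _ (succTr m b)).2.1).symm
    · exact ((Lpair c _ _ (succTr m d)).1).symm
  · -- edge-edge condition
    rintro u v w hv hw hvw
    obtain ⟨t1, t2, t3, t4, t5, t6⟩ :=
      Ltriple u.1 (labF m (u.2-1)) (labF m u.2) (labF m (u.2+1)) (predTr m u.2) (succTr m u.2)
    rcases edge_classify m u v hv with ⟨hv1, hv2⟩ | ⟨hv1, hv2⟩ | ⟨hv1, hv2⟩ | ⟨hv1, hv2⟩ <;>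
      rcases edge_classify m u w hw with ⟨hw1, hw2⟩ | ⟨hw1, hw2⟩ | ⟨hw1, hw2⟩ | ⟨hw1, hw2⟩ <;>
      first
        | exact absurd (hv1.trans hw1.symm) hvw
        | (rw [hv2, hw2];
           first
             | exact t1 | exact t2 | exact t3 | exact t4 | exact t5 | exact t6
             | exact t1.symm | exact t2.symm | exact t3.symm | exact t4.symm
             | exact t5.symm | exact t6.symm)
  · -- edge-vertex condition
    rintro ⟨a, b⟩ ⟨c, d⟩ hadj
    rw [adj_iff] at hadj
    obtain ⟨h9, hn⟩ := hadj
    dsimp only at h9 hn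
    unfold cvF
    dsimp only
    rcases h9 with h9 | h9 <;> rcases hn with hn | hn <;> subst h9 <;> subst hn <;>
      rw [ce_mk]
    · rw [FF_up_pp m a b (b+1) rfl]
      exact ⟨(Lpair a _ _ (succTr m b)).2.2.1, (Lpair a _ _ (succTr m b)).2.2.2.1⟩
    · rw [FF_up_pm m a (d+1) d rfl]
      exact ⟨(Lpair a _ _ (succTr m d)).2.2.2.2.1, (Lpair a _ _ (succTr m d)).2.2.2.2.2⟩
    · rw [FF_down_pm m c b (b+1) rfl]
      exact ⟨(Lpair c _ _ (succTr m b)).2.2.2.2.2, (Lpair c _ _ (succTr m b)).2.2.2.2.1⟩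
    · rw [FF_down_pp m c (d+1) d rfl]
      exact ⟨(Lpair c _ _ (succTr m d)).2.2.2.1, (Lpair c _ _ (succTr m d)).2.2.1⟩

lemma lower (k : ℕ)
    (h : HasTotalColoring (tensorProd (cycleGraph 9) (cycleGraph (m+3))) k) : 5 ≤ k := by
  obtain ⟨cv, ce, hvv, hee, hev⟩ := h
  have a1 : (tensorProd (cycleGraph 9) (cycleGraph (m+3))).Adj (0, 0) (1, 1) := by
    rw [adj_iff]
    exact ⟨Or.inl (show (1 : Fin 9) = 0 + 1 by decide), Or.inl (zero_add 1).symm⟩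
  have a2 : (tensorProd (cycleGraph 9) (cycleGraph (m+3))).Adj (0, 0) (1, -1) := by
    rw [adj_iff]
    exact ⟨Or.inl (show (1 : Fin 9) = 0 + 1 by decide), Or.inr (neg_add_cancel 1).symm⟩
  have a3 : (tensorProd (cycleGraph 9) (cycleGraph (m+3))).Adj (0, 0) (8, 1) := by
    rw [adj_iff]
    exact ⟨Or.inr (show (0 : Fin 9) = 8 + 1 by decide), Or.inl (zero_add 1).symm⟩
  have a4 : (tensorProd (cycleGraph 9) (cycleGraph (m+3))).Adj (0, 0) (8, -1) := by
    rw [adj_iff]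
    exact ⟨Or.inr (show (0 : Fin 9) = 8 + 1 by decide), Or.inr (neg_add_cancel 1).symm⟩
  have hone : (1 : Fin (m+3)) ≠ -1 := by
    intro hh
    have h2 : (1 : Fin (m+3)) + 1 = -1 + 1 := congrArg (· + 1) hh
    exact two_ne m (h2.trans (neg_add_cancel 1))
  have n12 : ((1, 1) : Fin 9 × Fin (m+3)) ≠ (1, -1) :=
    fun hh => hone (congrArg Prod.snd hh)
  have n34 : ((8, 1) : Fin 9 × Fin (m+3)) ≠ (8, -1) :=
    fun hh => hone (congrArg Prod.snd hh)
  have n13 : ((1, 1) : Fin 9 × Fin (m+3)) ≠ (8, 1) :=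
    fun hh => absurd (congrArg Prod.fst hh) (show ¬(1 : Fin 9) = 8 by decide)
  have n14 : ((1, 1) : Fin 9 × Fin (m+3)) ≠ (8, -1) :=
    fun hh => absurd (congrArg Prod.fst hh) (show ¬(1 : Fin 9) = 8 by decide)
  have n23 : ((1, -1) : Fin 9 × Fin (m+3)) ≠ (8, 1) :=
    fun hh => absurd (congrArg Prod.fst hh) (show ¬(1 : Fin 9) = 8 by decide)
  have n24 : ((1, -1) : Fin 9 × Fin (m+3)) ≠ (8, -1) :=
    fun hh => absurd (congrArg Prod.fst hh) (show ¬(1 : Fin 9) = 8 by decide)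
  have hnodup : ([cv (0,0), ce s((0,0),(1,1)), ce s((0,0),(1,-1)), ce s((0,0),(8,1)),
      ce s((0,0),(8,-1))] : List (Fin k)).Nodup := by
    simp only [List.nodup_cons, List.mem_cons, List.not_mem_nil, or_false, List.mem_singleton,
      List.nodup_nil, and_true, not_or]
    refine ⟨⟨?_, ?_, ?_, ?_⟩, ⟨?_, ?_, ?_⟩, ⟨?_, ?_⟩, ?_⟩
    · exact ((hev _ _ a1).1).symm
    · exact ((hev _ _ a2).1).symm
    · exact ((hev _ _ a3).1).symm
    · exact ((hev _ _ a4).1).symm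
    · exact hee _ _ _ a1 a2 n12
    · exact hee _ _ _ a1 a3 n13
    · exact hee _ _ _ a1 a4 n14
    · exact hee _ _ _ a2 a3 n23
    · exact hee _ _ _ a2 a4 n24
    · exact ⟨hee _ _ _ a3 a4 n34, not_false⟩
  have hlen := hnodup.length_le_card
  simpa using hlen

end Construction

end C9Cn


theorem c9_tensor_cn (n : ℕ) (hn : 3 ≤ n) :
    totalChromaticNumber (tensorProd (cycleGraph 9) (cycleGraph n)) = 5 := by
  obtain ⟨m, rfl⟩ : ∃ m, n = m + 3 := ⟨n - 3, by omega⟩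
  apply le_antisymm
  · exact Nat.sInf_le (C9Cn.upper m)
  · exact le_csInf ⟨5, C9Cn.upper m⟩ (fun k hk => C9Cn.lower m k hk)
end

section
/- For all positive integers m and n, the direct product of complete bipartite graphs K_{m,m} × K_{n,n} is Type 2, i.e., χ_T(K_{m,m} × K_{n,n}) = mn + 2. -/
open SimpleGraph

/-- Monotonicity of total colorings in the number of colors. -/
lemma hasTotalColoring_mono {V : Type*} (G : SimpleGraph V) {k k' : ℕ} (h : k ≤ k')
    (hc : HasTotalColoring G k) : HasTotalColoring G k' := by
  obtain ⟨cv, ce, h1, h2, h3⟩ := hc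
  refine ⟨fun v => Fin.castLE h (cv v), fun e => Fin.castLE h (ce e), ?_, ?_, ?_⟩
  · intro u v huv hcontra
    exact h1 u v huv (Fin.castLE_injective h hcontra)
  · intro u v w huv huw hvw hcontra
    exact h2 u v w huv huw hvw (Fin.castLE_injective h hcontra)
  · intro u v huv
    exact ⟨fun hc' => (h3 u v huv).1 (Fin.castLE_injective h hc'),
      fun hc' => (h3 u v huv).2 (Fin.castLE_injective h hc')⟩

lemma decomp_eq {n a a' b b' : ℕ} (hb : b < n) (hb' : b' < n)
    (h : a * n + b = a' * n + b') : a = a' ∧ b = b' := by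
  have ha : a = a' := by
    rcases Nat.lt_trichotomy a a' with h2 | h2 | h2
    · exfalso
      have h3 : (a + 1) * n ≤ a' * n := Nat.mul_le_mul_right _ h2
      rw [Nat.add_mul, Nat.one_mul] at h3
      omega
    · exact h2
    · exfalso
      have h3 : (a' + 1) * n ≤ a * n := Nat.mul_le_mul_right _ h2
      rw [Nat.add_mul, Nat.one_mul] at h3
      omega
  subst ha
  exact ⟨rfl, by omega⟩

lemma mod_add_cancel {a b c r : ℕ} (hb : b < r) (hc : c < r)
    (h : (a + b) % r = (a + c) % r) : b = c := by
  have := Nat.ModEq.add_left_cancel' a (h : (a + b) ≡ (a + c) [MOD r])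
  simpa [Nat.ModEq, Nat.mod_eq_of_lt hb, Nat.mod_eq_of_lt hc] using this

lemma adj_side {V W : Type*} {x y z : V ⊕ W}
    (h1 : (completeBipartiteGraph V W).Adj x y)
    (h2 : (completeBipartiteGraph V W).Adj x z) : y.isLeft = z.isLeft := by
  cases x <;> cases y <;> cases z <;> simp_all [completeBipartiteGraph]

lemma sum_eq_of {k : ℕ} {x y : Fin k ⊕ Fin k} (hs : x.isLeft = y.isLeft)
    (hv : Sum.elim Fin.val Fin.val x = Sum.elim Fin.val Fin.val y) : x = y := by
  rcases x with a | a <;> rcases y with b | b <;> simp_all <;> exact Fin.ext hv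

section Bounds

variable (m n : ℕ)

/-- index of a vertex of the tensor product, forgetting sides -/
def vIdx : (Fin m ⊕ Fin m) × (Fin n ⊕ Fin n) → ℕ :=
  fun p => (Sum.elim Fin.val Fin.val p.1) * n + Sum.elim Fin.val Fin.val p.2

lemma vIdx_lt (p : (Fin m ⊕ Fin m) × (Fin n ⊕ Fin n)) : vIdx m n p < m * n := by
  obtain ⟨x, y⟩ := p
  have hx : Sum.elim Fin.val Fin.val x < m := by rcases x with a | a <;> simp [a.isLt]
  have hy : Sum.elim Fin.val Fin.val y < n := by rcases y with b | b <;> simp [b.isLt]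
  calc vIdx m n (x, y) = (Sum.elim Fin.val Fin.val x) * n + Sum.elim Fin.val Fin.val y := rfl
    _ < (Sum.elim Fin.val Fin.val x) * n + n := by omega
    _ = (Sum.elim Fin.val Fin.val x + 1) * n := by ring
    _ ≤ m * n := Nat.mul_le_mul_right _ (by omega)

lemma upper_bound (hm : 0 < m) (hn : 0 < n) :
    HasTotalColoring (tensorProd (completeBipartiteGraph (Fin m) (Fin m))
      (completeBipartiteGraph (Fin n) (Fin n))) (m * n + 2) := by
  have hr : 0 < m * n := Nat.mul_pos hm hn
  refine ⟨fun p => if p.1.isLeft then ⟨m * n, by omega⟩ else ⟨m * n + 1, by omega⟩,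
    Sym2.lift ⟨fun u v => ⟨(vIdx m n u + vIdx m n v) % (m * n),
      lt_of_lt_of_le (Nat.mod_lt _ hr) (by omega)⟩,
      fun u v => by simp [Nat.add_comm]⟩, ?_, ?_, ?_⟩
  · rintro ⟨x, y⟩ ⟨x', y'⟩ ⟨hadjx, _⟩ hcontra
    rcases hadjx with ⟨hl, hr'⟩ | ⟨hl, hr'⟩ <;>
      rcases x with a | a <;> rcases x' with a' | a' <;> simp_all
  · rintro u v w huv huw hvw hcontra
    simp only [Sym2.lift_mk, Fin.mk.injEq] at hcontra
    have hidx : vIdx m n v = vIdx m n w :=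
      mod_add_cancel (vIdx_lt m n v) (vIdx_lt m n w) hcontra
    apply hvw
    obtain ⟨xu, yu⟩ := u; obtain ⟨xv, yv⟩ := v; obtain ⟨xw, yw⟩ := w
    obtain ⟨hxuv, hyuv⟩ := huv
    obtain ⟨hxuw, hyuw⟩ := huw
    have hvb : Sum.elim Fin.val Fin.val yv < n := by rcases yv with b | b <;> simp [b.isLt]
    have hwb : Sum.elim Fin.val Fin.val yw < n := by rcases yw with b | b <;> simp [b.isLt]
    obtain ⟨hA, hB⟩ := decomp_eq hvb hwb hidx
    have e1 : xv = xw := sum_eq_of (adj_side hxuv hxuw) hA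
    have e2 : yv = yw := sum_eq_of (adj_side hyuv hyuw) hB
    rw [e1, e2]
  · rintro u v huv
    have hlt := Nat.mod_lt (vIdx m n u + vIdx m n v) hr
    constructor <;>
      (simp only [Sym2.lift_mk]
       split <;>
         (intro hcontra
          rw [Fin.mk.injEq] at hcontra
          omega))

lemma lower_bound_s17 (hm : 0 < m) (hn : 0 < n) :
    ¬ HasTotalColoring (tensorProd (completeBipartiteGraph (Fin m) (Fin m))
      (completeBipartiteGraph (Fin n) (Fin n))) (m * n + 1) := by
  rintro ⟨cv, ce, h1, h2, h3⟩
  set G := tensorProd (completeBipartiteGraph (Fin m) (Fin m))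
      (completeBipartiteGraph (Fin n) (Fin n)) with hG
  let L : Fin m × Fin n → (Fin m ⊕ Fin m) × (Fin n ⊕ Fin n) :=
    fun p => (Sum.inl p.1, Sum.inl p.2)
  let R : Fin m × Fin n → (Fin m ⊕ Fin m) × (Fin n ⊕ Fin n) :=
    fun p => (Sum.inr p.1, Sum.inr p.2)
  have Linj : Function.Injective L := by
    rintro ⟨a, b⟩ ⟨a', b'⟩ h
    simpa [L, Prod.ext_iff] using h
  have Rinj : Function.Injective R := by
    rintro ⟨a, b⟩ ⟨a', b'⟩ h
    simpa [R, Prod.ext_iff] using h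
  have adjLR : ∀ p q, G.Adj (L p) (R q) := by
    intro p q
    exact ⟨Or.inl ⟨rfl, rfl⟩, Or.inl ⟨rfl, rfl⟩⟩
  let p0 : Fin m × Fin n := (⟨0, hm⟩, ⟨0, hn⟩)
  let u0 := L p0
  let c := cv u0
  -- Step 1: every right vertex has an incident edge colored c going to the left
  have step1 : ∀ q, ∃ p, ce s(R q, L p) = c := by
    intro q
    have hcvq : cv (R q) ≠ c := (h1 (R q) u0 (adjLR p0 q).symm)
    let g : Fin m × Fin n → {x : Fin (m * n + 1) // x ≠ cv (R q)} :=
      fun p => ⟨ce s(R q, L p), (h3 (R q) (L p) (adjLR p q).symm).1⟩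
    have ginj : Function.Injective g := by
      intro p p' hpp'
      by_contra hne
      exact h2 (R q) (L p) (L p') (adjLR p q).symm (adjLR p' q).symm
        (fun h => hne (Linj h)) (by simpa [g, Subtype.ext_iff] using hpp')
    have hcard : Fintype.card (Fin m × Fin n)
        = Fintype.card {x : Fin (m * n + 1) // x ≠ cv (R q)} := by
      simp [Fintype.card_subtype_compl]
    have gsurj := (Fintype.bijective_iff_injective_and_card g).2 ⟨ginj, hcard⟩ |>.2
    obtain ⟨p, hp⟩ := gsurj ⟨c, Ne.symm hcvq⟩
    exact ⟨p, by simpa [g, Subtype.ext_iff] using hp⟩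
  choose φ hφ using step1
  have φinj : Function.Injective φ := by
    intro q q' hqq'
    by_contra hne
    apply h2 (L (φ q)) (R q) (R q') (adjLR (φ q) q) (by rw [hqq']; exact adjLR (φ q') q')
      (fun h => hne (Rinj h))
    rw [Sym2.eq_swap, hφ q, hqq', Sym2.eq_swap, hφ q']
  have φsurj : Function.Surjective φ := Finite.surjective_of_injective φinj
  obtain ⟨q, hq⟩ := φsurj p0
  have hne := (h3 (R q) u0 (adjLR p0 q).symm).2
  have heq := hφ q
  rw [hq] at heq
  exact hne heq

end Bounds

theorem completeBipartite_tensor_type2 (m n : ℕ) (hm : 0 < m) (hn : 0 < n) :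
    totalChromaticNumber (tensorProd (completeBipartiteGraph (Fin m) (Fin m))
        (completeBipartiteGraph (Fin n) (Fin n))) = m * n + 2 := by
  have hmem : HasTotalColoring (tensorProd (completeBipartiteGraph (Fin m) (Fin m))
      (completeBipartiteGraph (Fin n) (Fin n))) (m * n + 2) := upper_bound m n hm hn
  apply le_antisymm
  · exact Nat.sInf_le hmem
  · refine le_csInf ⟨_, hmem⟩ ?_
    intro k hk
    by_contra hlt
    push_neg at hlt
    exact lower_bound_s17 m n hm hn
      (hasTotalColoring_mono _ (by omega : k ≤ m * n + 1) hk)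
end
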